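/- arXiv:2003.13305 — 6 statements merged into one kernel-verified Lean document; each statement's English description precedes it below -/
import Mathlib

section
/- Let ζ₁ = (u₁, w₁) and ζ₂ = (u₂, w₂) be corners of the box. Then ζ₁ and ζ₂ are connected in the corner graph if and only if u₁ and u₂ are connected in the open primal graph and w₁ and w₂ are connected in the open dual graph. -/
open SimpleGraph

/-! We work on the box `{0, …, n} × {0, …, m} ⊆ ℤ²`.  Dual vertices are encoded by their
integer coordinates: the pair `(i, j) ∈ ℤ²` (with `−1 ≤ i ≤ n`, `−1 ≤ j ≤ m`) stands for
the dual point `(i + 1/2, j + 1/2)`. -/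

/-- `u` is a primal vertex of the box. -/
def inPrimal (n m : ℕ) (u : ℤ × ℤ) : Prop :=
  0 ≤ u.1 ∧ u.1 ≤ (n : ℤ) ∧ 0 ≤ u.2 ∧ u.2 ≤ (m : ℤ)

/-- `w` encodes a dual vertex `(w.1 + 1/2, w.2 + 1/2)` of the box. -/
def inDual (n m : ℕ) (w : ℤ × ℤ) : Prop :=
  -1 ≤ w.1 ∧ w.1 ≤ (n : ℤ) ∧ -1 ≤ w.2 ∧ w.2 ≤ (m : ℤ)

/-- Two points of `ℤ²` at Euclidean distance `1`. -/
def stepAdj (a b : ℤ × ℤ) : Prop :=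
  (a.1 = b.1 ∧ |a.2 - b.2| = 1) ∨ (a.2 = b.2 ∧ |a.1 - b.1| = 1)

lemma stepAdj.symm {a b : ℤ × ℤ} (h : stepAdj a b) : stepAdj b a := by
  rcases h with ⟨h1, h2⟩ | ⟨h1, h2⟩
  · exact Or.inl ⟨h1.symm, by rwa [abs_sub_comm]⟩
  · exact Or.inr ⟨h1.symm, by rwa [abs_sub_comm]⟩

/-- The open primal graph of an FK configuration `ω` (free boundary conditions):
its edges are the open primal edges of the box. -/
def primalGraph (n m : ℕ) (ω : Sym2 (ℤ × ℤ) → Bool) : SimpleGraph (ℤ × ℤ) where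
  Adj u v := u ≠ v ∧ inPrimal n m u ∧ inPrimal n m v ∧ stepAdj u v ∧ ω s(u, v) = true
  symm := by
    constructor
    rintro u v ⟨h1, h2, h3, h4, h5⟩
    exact ⟨h1.symm, h3, h2, h4.symm, by rwa [Sym2.eq_swap]⟩
  loopless := by constructor; rintro u ⟨h1, -⟩; exact h1 rfl

/-- The primal edge crossed by the dual edge `{w, w'}` (all in integer coordinates:
the dual edge joining `(w.1 + 1/2, w.2 + 1/2)` and `(w'.1 + 1/2, w'.2 + 1/2)`). -/
def crossEdge (w w' : ℤ × ℤ) : Sym2 (ℤ × ℤ) :=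
  if w.1 = w'.1 then s((w.1, max w.2 w'.2), (w.1 + 1, max w.2 w'.2))
  else s((max w.1 w'.1, w.2), (max w.1 w'.1, w.2 + 1))

/-- A set of primal vertices forming an edge of the box. -/
def edgeInBox (n m : ℕ) (e : Sym2 (ℤ × ℤ)) : Prop := ∀ v ∈ e, inPrimal n m v

/-- A dual edge is interior iff its crossing primal edge lies in the box. -/
def isInterior (n m : ℕ) (w w' : ℤ × ℤ) : Prop := edgeInBox n m (crossEdge w w')

lemma crossEdge_symm {w w' : ℤ × ℤ} (h : stepAdj w w') : crossEdge w w' = crossEdge w' w := by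
  unfold crossEdge
  rcases h with ⟨h1, h2⟩ | ⟨h1, h2⟩
  · rw [if_pos h1, if_pos h1.symm, h1, max_comm]
  · have hne : w.1 ≠ w'.1 := by
      intro hc
      rw [hc, sub_self, abs_zero] at h2
      exact one_ne_zero h2.symm
    rw [if_neg hne, if_neg (Ne.symm hne), h1, max_comm]

/-- The open dual graph of an FK configuration `ω` with free boundary conditions: an
interior dual edge is present iff its crossing primal edge is closed; all boundary dual
edges are present. -/
def dualGraph (n m : ℕ) (ω : Sym2 (ℤ × ℤ) → Bool) : SimpleGraph (ℤ × ℤ) where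
  Adj w w' := w ≠ w' ∧ inDual n m w ∧ inDual n m w' ∧ stepAdj w w' ∧
    (isInterior n m w w' → ω (crossEdge w w') = false)
  symm := by
    constructor
    rintro w w' ⟨h1, h2, h3, h4, h5⟩
    refine ⟨h1.symm, h3, h2, h4.symm, ?_⟩
    unfold isInterior at h5 ⊢
    rw [crossEdge_symm h4.symm]
    exact h5
  loopless := by constructor; rintro w ⟨h1, -⟩; exact h1 rfl

/-- A corner: a pair `(u, w)` of a primal vertex and a dual vertex at Euclidean distance
`√2 / 2`. -/
def isCorner (n m : ℕ) (ζ : (ℤ × ℤ) × (ℤ × ℤ)) : Prop :=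
  inPrimal n m ζ.1 ∧ inDual n m ζ.2 ∧
    (ζ.2.1 = ζ.1.1 ∨ ζ.2.1 = ζ.1.1 - 1) ∧ (ζ.2.2 = ζ.1.2 ∨ ζ.2.2 = ζ.1.2 - 1)

/-- The corner graph: corners `(u, w)` and `(u', w)` are adjacent whenever `{u, u'}` is an
open primal edge (and `w` is at distance `√2/2` from both `u` and `u'`), and corners
`(u, w)` and `(u, w')` are adjacent whenever `{w, w'}` is an open dual edge (and `u` is at
distance `√2/2` from both `w` and `w'`). -/
def cornerGraph (n m : ℕ) (ω : Sym2 (ℤ × ℤ) → Bool) :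
    SimpleGraph ((ℤ × ℤ) × (ℤ × ℤ)) where
  Adj ζ ζ' := ζ ≠ ζ' ∧ isCorner n m ζ ∧ isCorner n m ζ' ∧
    ((ζ.2 = ζ'.2 ∧ (primalGraph n m ω).Adj ζ.1 ζ'.1) ∨
     (ζ.1 = ζ'.1 ∧ (dualGraph n m ω).Adj ζ.2 ζ'.2))
  symm := by
    constructor
    rintro ζ ζ' ⟨h1, h2, h3, h4⟩
    refine ⟨h1.symm, h3, h2, ?_⟩
    rcases h4 with ⟨ha, hb⟩ | ⟨ha, hb⟩
    · exact Or.inl ⟨ha.symm, hb.symm⟩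
    · exact Or.inr ⟨ha.symm, hb.symm⟩
  loopless := by constructor; rintro ζ ⟨h1, -⟩; exact h1 rfl
namespace CornerAux

/-- the four corner offsets -/
def offs (d : ℤ × ℤ) : Prop := d = (0,0) ∨ d = (-1,0) ∨ d = (-1,-1) ∨ d = (0,-1)

def rot (d : ℤ × ℤ) : ℤ × ℤ := (-1 - d.2, d.1)

def vdir (d : ℤ × ℤ) : ℤ × ℤ := (d.1 - d.2, d.1 + d.2 + 1)

lemma offs_rot {d : ℤ × ℤ} (h : offs d) : offs (rot d) := by
  rcases h with h|h|h|h <;> subst h <;> simp [offs, rot, Prod.ext_iff] <;> omega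

lemma rot_ne {d : ℤ × ℤ} : rot d ≠ d := by
  simp only [rot, Prod.ext_iff, ne_eq, not_and]; omega

lemma rot_rot_ne {d : ℤ × ℤ} : rot (rot d) ≠ d := by
  simp only [rot, Prod.ext_iff, ne_eq, not_and]; omega

lemma vdir_ne_zero {d : ℤ × ℤ} : vdir d ≠ 0 := by
  simp only [vdir, Prod.ext_iff, Prod.fst_zero, Prod.snd_zero, ne_eq, not_and]
  intro h; omega

lemma isCorner_iff {n m : ℕ} {x y : ℤ × ℤ} :
    isCorner n m (x, y) ↔ inPrimal n m x ∧ inDual n m y ∧ offs (y - x) := by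
  unfold isCorner inPrimal inDual offs
  simp only [Prod.ext_iff, Prod.fst_sub, Prod.snd_sub, Prod.mk.injEq]
  constructor
  · rintro ⟨h1, h2, h3, h4⟩; exact ⟨h1, h2, by omega⟩
  · rintro ⟨h1, h2, h3⟩; exact ⟨h1, h2, by omega, by omega⟩

lemma isCorner_mk {n m : ℕ} {x d : ℤ × ℤ} (hx : inPrimal n m x) (hd : offs d) :
    isCorner n m (x, x + d) := by
  rw [isCorner_iff]
  refine ⟨hx, ?_, by simpa using hd⟩
  obtain ⟨a1, a2, a3, a4⟩ := hx
  simp only [inDual, Prod.fst_add, Prod.snd_add]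
  rcases hd with h|h|h|h <;> subst h <;> norm_num <;> omega

lemma stepAdj_vdir {x : ℤ × ℤ} {d : ℤ × ℤ} (hd : offs d) : stepAdj x (x + vdir d) := by
  rcases hd with h|h|h|h <;> subst h <;>
    simp only [stepAdj, vdir, Prod.fst_add, Prod.snd_add] <;> norm_num <;> omega

lemma stepAdj_flank {x : ℤ × ℤ} {d : ℤ × ℤ} (hd : offs d) :
    stepAdj (x + d) (x + rot d) := by
  rcases hd with h|h|h|h <;> subst h <;>
    simp only [stepAdj, rot, Prod.fst_add, Prod.snd_add] <;> norm_num <;> omega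

lemma exists_offs_of_stepAdj {p q : ℤ × ℤ} (h : stepAdj p q) :
    ∃ d, offs d ∧ q = p + vdir d := by
  rcases h with ⟨h1, h2⟩ | ⟨h1, h2⟩
  · rcases (abs_eq (by norm_num)).mp h2 with h3 | h3
    · exact ⟨(-1,-1), Or.inr (Or.inr (Or.inl rfl)),
        by simp only [vdir, Prod.ext_iff, Prod.fst_add, Prod.snd_add]; norm_num; omega⟩
    · exact ⟨(0,0), Or.inl rfl,
        by simp only [vdir, Prod.ext_iff, Prod.fst_add, Prod.snd_add]; norm_num; omega⟩
  · rcases (abs_eq (by norm_num)).mp h2 with h3 | h3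
    · exact ⟨(-1,0), Or.inr (Or.inl rfl),
        by simp only [vdir, Prod.ext_iff, Prod.fst_add, Prod.snd_add]; norm_num; omega⟩
    · exact ⟨(0,-1), Or.inr (Or.inr (Or.inr rfl)),
        by simp only [vdir, Prod.ext_iff, Prod.fst_add, Prod.snd_add]; norm_num; omega⟩

lemma padd (x : ℤ × ℤ) (a b : ℤ) : x + (a, b) = (x.1 + a, x.2 + b) := rfl

/-- crossing edge of the two flanks of the edge from `x` to `x + vdir d`. -/
lemma crossEdge_flank {x : ℤ × ℤ} {d : ℤ × ℤ} (hd : offs d) :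
    crossEdge (x + d) (x + rot d) = s(x, x + vdir d) := by
  rcases hd with h|h|h|h <;> subst h <;>
    (simp only [rot, vdir]
     norm_num [padd]
     simp only [crossEdge]
     split_ifs with hc <;>
     · first
       | (exfalso; omega)
       | (rw [Sym2.eq_iff]; simp only [Prod.mk.injEq, Prod.ext_iff, and_true, true_and]; omega))

end CornerAux
namespace CornerAux

lemma flank_unique {x d y y' : ℤ × ℤ} (hd : offs d) (hs : stepAdj y y')
    (hc : crossEdge y y' = s(x, x + vdir d)) :
    (y = x + d ∧ y' = x + rot d) ∨ (y = x + rot d ∧ y' = x + d) := by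
  rcases hs with ⟨e1, e2⟩ | ⟨e1, e2⟩ <;>
    rcases (abs_eq (by norm_num)).mp e2 with e3 | e3 <;>
    rcases hd with h|h|h|h <;> subst h <;>
    (simp only [crossEdge, vdir, rot] at hc
     norm_num [padd] at hc
     split_ifs at hc with hcc <;>
     (rw [Sym2.eq_iff] at hc
      simp only [Prod.mk.injEq, Prod.ext_iff, and_true, true_and] at hc
      simp only [Prod.ext_iff, padd, rot, Prod.mk.injEq]
      omega))

lemma common_vertex {x d z : ℤ × ℤ} (hd : offs d)
    (h1 : offs (x + d - z)) (h2 : offs (x + rot d - z)) :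
    z = x ∨ z = x + vdir d := by
  rcases hd with h|h|h|h <;> subst h <;>
  (simp only [offs, rot, Prod.ext_iff, Prod.fst_sub, Prod.snd_sub, Prod.fst_add,
     Prod.snd_add, Prod.mk.injEq] at h1 h2
   norm_num at h1 h2
   simp only [Prod.ext_iff, padd, vdir, Prod.mk.injEq]
   norm_num
   omega)

end CornerAux
namespace CornerAux

/-- closing an edge of a configuration -/
def close (ω : Sym2 (ℤ × ℤ) → Bool) (e : Sym2 (ℤ × ℤ)) : Sym2 (ℤ × ℤ) → Bool :=
  fun E => if E = e then false else ω E

lemma close_le {ω : Sym2 (ℤ × ℤ) → Bool} {e E : Sym2 (ℤ × ℤ)}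
    (h : close ω e E = true) : ω E = true := by
  unfold close at h; split_ifs at h; exact h

lemma close_eq_of_ne {ω : Sym2 (ℤ × ℤ) → Bool} {e E : Sym2 (ℤ × ℤ)} (h : E ≠ e) :
    close ω e E = ω E := by unfold close; simp [h]

lemma close_self {ω : Sym2 (ℤ × ℤ) → Bool} {e : Sym2 (ℤ × ℤ)} :
    close ω e e = false := by unfold close; simp

variable {n m : ℕ}

lemma primal_mono {ω₁ ω₂ : Sym2 (ℤ × ℤ) → Bool} (h : ∀ E, ω₁ E = true → ω₂ E = true) :
    primalGraph n m ω₁ ≤ primalGraph n m ω₂ := by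
  rintro u v ⟨h1, h2, h3, h4, h5⟩
  exact ⟨h1, h2, h3, h4, h (s(u,v)) h5⟩

lemma primal_close_le {ω : Sym2 (ℤ × ℤ) → Bool} {e : Sym2 (ℤ × ℤ)} :
    primalGraph n m (close ω e) ≤ primalGraph n m ω :=
  primal_mono (fun _ => close_le)

lemma primal_adj_close {ω : Sym2 (ℤ × ℤ) → Bool} {e : Sym2 (ℤ × ℤ)} {u v : ℤ × ℤ}
    (h : (primalGraph n m ω).Adj u v) (hne : s(u,v) ≠ e) :
    (primalGraph n m (close ω e)).Adj u v := by
  obtain ⟨h1, h2, h3, h4, h5⟩ := h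
  exact ⟨h1, h2, h3, h4, by rwa [close_eq_of_ne hne]⟩

lemma dual_le_close {ω : Sym2 (ℤ × ℤ) → Bool} {e : Sym2 (ℤ × ℤ)} :
    dualGraph n m ω ≤ dualGraph n m (close ω e) := by
  rintro w w' ⟨h1, h2, h3, h4, h5⟩
  refine ⟨h1, h2, h3, h4, fun hi => ?_⟩
  by_cases hce : crossEdge w w' = e
  · rw [hce]; exact close_self
  · rw [close_eq_of_ne hce]; exact h5 hi

lemma dual_close_adj_cases {ω : Sym2 (ℤ × ℤ) → Bool} {e : Sym2 (ℤ × ℤ)} {w w' : ℤ × ℤ}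
    (h : (dualGraph n m (close ω e)).Adj w w') :
    (dualGraph n m ω).Adj w w' ∨ crossEdge w w' = e := by
  by_cases hce : crossEdge w w' = e
  · exact Or.inr hce
  · obtain ⟨h1, h2, h3, h4, h5⟩ := h
    refine Or.inl ⟨h1, h2, h3, h4, fun hi => ?_⟩
    have := h5 hi; rwa [close_eq_of_ne hce] at this

/-- The data of an open box edge, with a chosen orientation. -/
structure Surg (n m : ℕ) (ω : Sym2 (ℤ × ℤ) → Bool) where
  p : ℤ × ℤ
  d1 : ℤ × ℤ
  hd : offs d1
  hp : inPrimal n m p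
  hq : inPrimal n m (p + vdir d1)
  hopen : ω s(p, p + vdir d1) = true

namespace Surg

variable {ω : Sym2 (ℤ × ℤ) → Bool} (S : Surg n m ω)

def q : ℤ × ℤ := S.p + vdir S.d1
def a : ℤ × ℤ := S.p + S.d1
def b : ℤ × ℤ := S.p + rot S.d1
def e : Sym2 (ℤ × ℤ) := s(S.p, S.q)
def ω' : Sym2 (ℤ × ℤ) → Bool := close ω S.e
def A : (ℤ × ℤ) × (ℤ × ℤ) := (S.p, S.a)
def B : (ℤ × ℤ) × (ℤ × ℤ) := (S.p, S.b)
def A' : (ℤ × ℤ) × (ℤ × ℤ) := (S.q, S.a)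
def B' : (ℤ × ℤ) × (ℤ × ℤ) := (S.q, S.b)

lemma p_ne_q : S.p ≠ S.q := by
  intro h
  have h2 : S.p + vdir S.d1 = S.p + 0 := by rw [add_zero]; exact h.symm
  exact vdir_ne_zero (add_left_cancel h2)

lemma a_ne_b : S.a ≠ S.b := by
  intro h
  unfold a b at h
  exact rot_ne (add_left_cancel h).symm

lemma stepAdj_pq : stepAdj S.p S.q := stepAdj_vdir S.hd

lemma cornerA : isCorner n m S.A := isCorner_mk S.hp S.hd
lemma cornerB : isCorner n m S.B := isCorner_mk S.hp (offs_rot S.hd)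

lemma a_eq_q_add : S.a = S.q + (S.d1.2, -1 - S.d1.1) := by
  unfold a q vdir
  apply Prod.ext <;> simp [Prod.fst_add, Prod.snd_add] <;> ring

lemma b_eq_q_add : S.b = S.q + (-1 - S.d1.1, -1 - S.d1.2) := by
  unfold b q vdir rot
  apply Prod.ext <;> simp [Prod.fst_add, Prod.snd_add] <;> ring

lemma offs_aq : offs ((S.d1.2 : ℤ), -1 - S.d1.1) := by
  rcases S.hd with h|h|h|h <;> rw [h] <;> simp [offs, Prod.ext_iff] <;> omega

lemma offs_bq : offs ((-1 - S.d1.1 : ℤ), -1 - S.d1.2) := by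
  rcases S.hd with h|h|h|h <;> rw [h] <;> simp [offs, Prod.ext_iff] <;> omega

lemma cornerA' : isCorner n m S.A' := by
  have h := isCorner_mk S.hq S.offs_aq
  have he : S.A' = (S.p + vdir S.d1, S.p + vdir S.d1 + ((S.d1.2 : ℤ), -1 - S.d1.1)) := by
    refine Prod.ext rfl ?_
    refine Prod.ext ?_ ?_ <;> simp [A', a, q, vdir, Prod.fst_add, Prod.snd_add] <;> ring
  rw [he]; exact h
lemma cornerB' : isCorner n m S.B' := by
  have h := isCorner_mk S.hq S.offs_bq
  have he : S.B' = (S.p + vdir S.d1, S.p + vdir S.d1 + ((-1 - S.d1.1 : ℤ), -1 - S.d1.2)) := by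
    refine Prod.ext rfl ?_
    refine Prod.ext ?_ ?_ <;> simp [B', b, q, vdir, rot, Prod.fst_add, Prod.snd_add] <;> ring
  rw [he]; exact h

lemma crossEdge_ab : crossEdge S.a S.b = S.e := crossEdge_flank S.hd

lemma stepAdj_ab : stepAdj S.a S.b := stepAdj_flank S.hd

lemma inDual_a : inDual n m S.a := (isCorner_iff.mp S.cornerA).2.1
lemma inDual_b : inDual n m S.b := (isCorner_iff.mp S.cornerB).2.1

lemma primal_adj_pq : (primalGraph n m ω).Adj S.p S.q :=
  ⟨S.p_ne_q, S.hp, S.hq, S.stepAdj_pq, S.hopen⟩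

lemma adj_AA' : (cornerGraph n m ω).Adj S.A S.A' := by
  refine ⟨?_, S.cornerA, S.cornerA', Or.inl ⟨rfl, S.primal_adj_pq⟩⟩
  intro h; exact S.p_ne_q (congrArg Prod.fst h)

lemma adj_BB' : (cornerGraph n m ω).Adj S.B S.B' := by
  refine ⟨?_, S.cornerB, S.cornerB', Or.inl ⟨rfl, S.primal_adj_pq⟩⟩
  intro h; exact S.p_ne_q (congrArg Prod.fst h)

lemma dual_adj_ab' : (dualGraph n m S.ω').Adj S.a S.b := by
  refine ⟨S.a_ne_b, S.inDual_a, S.inDual_b, S.stepAdj_ab, fun _ => ?_⟩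
  rw [S.crossEdge_ab]; exact close_self

lemma adj'_AB : (cornerGraph n m S.ω').Adj S.A S.B := by
  refine ⟨?_, S.cornerA, S.cornerB, Or.inr ⟨rfl, S.dual_adj_ab'⟩⟩
  intro h; exact S.a_ne_b (congrArg Prod.snd h)

lemma adj'_A'B' : (cornerGraph n m S.ω').Adj S.A' S.B' := by
  refine ⟨?_, S.cornerA', S.cornerB', Or.inr ⟨rfl, S.dual_adj_ab'⟩⟩
  intro h; exact S.a_ne_b (congrArg Prod.snd h)

/-- difference of the two corner graphs -/
lemma corner_adj_cases {ζ ζ' : (ℤ × ℤ) × (ℤ × ℤ)}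
    (h : (cornerGraph n m S.ω').Adj ζ ζ') :
    (cornerGraph n m ω).Adj ζ ζ' ∨
      ((ζ = S.A ∧ ζ' = S.B) ∨ (ζ = S.B ∧ ζ' = S.A) ∨
       (ζ = S.A' ∧ ζ' = S.B') ∨ (ζ = S.B' ∧ ζ' = S.A')) := by
  obtain ⟨h1, h2, h3, hor⟩ := h
  rcases hor with ⟨heq, hpadj⟩ | ⟨heq, hdadj⟩
  · exact Or.inl ⟨h1, h2, h3, Or.inl ⟨heq, primal_close_le hpadj⟩⟩
  · rcases dual_close_adj_cases hdadj with hgood | hce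
    · exact Or.inl ⟨h1, h2, h3, Or.inr ⟨heq, hgood⟩⟩
    · -- the crossing edge is e : identify the two flanks and the common vertex
      have hstep : stepAdj ζ.2 ζ'.2 := hdadj.2.2.2.1
      have hfl := flank_unique S.hd hstep (by rw [hce]; rfl)
      have hoz : offs (ζ.2 - ζ.1) := (isCorner_iff.mp (by exact h2)).2.2
      have hoz' : offs (ζ'.2 - ζ.1) := by
        have := (isCorner_iff.mp (by exact h3)).2.2
        rwa [← heq] at this
      have hcommon : ζ.1 = S.p ∨ ζ.1 = S.p + vdir S.d1 := by
        rcases hfl with ⟨hy, hy'⟩ | ⟨hy, hy'⟩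
        · refine common_vertex S.hd ?_ ?_
          · rw [show S.p + S.d1 = ζ.2 from hy.symm]; exact hoz
          · rw [show S.p + rot S.d1 = ζ'.2 from hy'.symm]; exact hoz'
        · refine common_vertex S.hd ?_ ?_
          · rw [show S.p + S.d1 = ζ'.2 from hy'.symm]; exact hoz'
          · rw [show S.p + rot S.d1 = ζ.2 from hy.symm]; exact hoz
      right
      have hv' : ζ'.1 = ζ.1 := heq.symm
      rcases hcommon with hv | hv <;> rcases hfl with ⟨hy, hy'⟩ | ⟨hy', hy⟩
      · exact Or.inl ⟨Prod.ext hv hy, Prod.ext (hv'.trans hv) hy'⟩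
      · exact Or.inr (Or.inl ⟨Prod.ext hv hy', Prod.ext (hv'.trans hv) hy⟩)
      · exact Or.inr (Or.inr (Or.inl ⟨Prod.ext hv hy, Prod.ext (hv'.trans hv) hy'⟩))
      · exact Or.inr (Or.inr (Or.inr ⟨Prod.ext hv hy', Prod.ext (hv'.trans hv) hy⟩))

end Surg
end CornerAux
namespace CornerAux
open SimpleGraph
variable {n m : ℕ}

/-- forward lemma : a corner walk projects to primal and dual connections. -/
lemma corner_reach_proj {ω : Sym2 (ℤ × ℤ) → Bool} {ζ ζ' : (ℤ × ℤ) × (ℤ × ℤ)}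
    (h : (cornerGraph n m ω).Reachable ζ ζ') :
    (primalGraph n m ω).Reachable ζ.1 ζ'.1 ∧ (dualGraph n m ω).Reachable ζ.2 ζ'.2 := by
  obtain ⟨W⟩ := h
  induction W with
  | nil => exact ⟨Reachable.refl _, Reachable.refl _⟩
  | cons hadj W ih =>
    rcases hadj.2.2.2 with ⟨he, hp⟩ | ⟨he, hp⟩
    · exact ⟨(hp.reachable).trans ih.1, he ▸ ih.2⟩
    · exact ⟨he ▸ ih.1, (hp.reachable).trans ih.2⟩

namespace Surg
variable {ω : Sym2 (ℤ × ℤ) → Bool} (S : Surg n m ω)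

lemma primal_reach_close (hpq' : (primalGraph n m S.ω').Reachable S.p S.q)
    {x y : ℤ × ℤ} (h : (primalGraph n m ω).Reachable x y) :
    (primalGraph n m S.ω').Reachable x y := by
  obtain ⟨W⟩ := h
  induction W with
  | nil => exact Reachable.refl _
  | cons hadj W ih =>
    rename_i u v w
    refine Reachable.trans ?_ ih
    by_cases he : s(u, v) = S.e
    · rcases (Sym2.eq_iff).mp he with ⟨h1, h2⟩ | ⟨h1, h2⟩
      · exact h1 ▸ h2 ▸ hpq'
      · exact h1 ▸ h2 ▸ hpq'.symm
    · exact (primal_adj_close hadj he).reachable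

lemma primal_reach_cases {x y : ℤ × ℤ} (h : (primalGraph n m ω).Reachable x y) :
    (primalGraph n m S.ω').Reachable x y ∨
      ((primalGraph n m S.ω').Reachable x S.p ∧ (primalGraph n m S.ω').Reachable S.q y) ∨
      ((primalGraph n m S.ω').Reachable x S.q ∧ (primalGraph n m S.ω').Reachable S.p y) := by
  obtain ⟨W⟩ := h
  induction W with
  | nil => exact Or.inl (Reachable.refl _)
  | cons hadj W ih =>
    rename_i u v w
    by_cases he : s(u, v) = S.e
    · rcases (Sym2.eq_iff).mp he with ⟨h1, h2⟩ | ⟨h1, h2⟩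
      · subst h1; subst h2
        rcases ih with h3 | ⟨h3, h4⟩ | ⟨h3, h4⟩
        · exact Or.inr (Or.inl ⟨Reachable.refl _, h3⟩)
        · exact Or.inr (Or.inl ⟨Reachable.refl _, h4⟩)
        · exact Or.inl h4
      · subst h1; subst h2
        rcases ih with h3 | ⟨h3, h4⟩ | ⟨h3, h4⟩
        · exact Or.inr (Or.inr ⟨Reachable.refl _, h3⟩)
        · exact Or.inl h4
        · exact Or.inr (Or.inr ⟨Reachable.refl _, h4⟩)
    · have hstep := (primal_adj_close hadj he).reachable
      rcases ih with h3 | ⟨h3, h4⟩ | ⟨h3, h4⟩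
      · exact Or.inl (hstep.trans h3)
      · exact Or.inr (Or.inl ⟨hstep.trans h3, h4⟩)
      · exact Or.inr (Or.inr ⟨hstep.trans h3, h4⟩)

lemma dual_patch (hab : (dualGraph n m ω).Reachable S.a S.b)
    {w w' : ℤ × ℤ} (h : (dualGraph n m S.ω').Reachable w w') :
    (dualGraph n m ω).Reachable w w' := by
  obtain ⟨W⟩ := h
  induction W with
  | nil => exact Reachable.refl _
  | cons hadj W ih =>
    refine Reachable.trans ?_ ih
    rcases dual_close_adj_cases hadj with hgood | hce
    · exact hgood.reachable
    · rcases flank_unique S.hd hadj.2.2.2.1 (by rw [hce]; rfl) with ⟨h1, h2⟩ | ⟨h1, h2⟩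
      · exact h1 ▸ h2 ▸ hab
      · exact h1 ▸ h2 ▸ hab.symm

/-- conversion of an `ω'`-corner walk into `ω`-corner connections. -/
lemma lemmaW {ζ ζ' : (ℤ × ℤ) × (ℤ × ℤ)}
    (h : (cornerGraph n m S.ω').Reachable ζ ζ') :
    (cornerGraph n m ω).Reachable ζ ζ' ∨
      ((cornerGraph n m ω).Reachable ζ S.A ∧ (cornerGraph n m ω).Reachable ζ' S.B) ∨
      ((cornerGraph n m ω).Reachable ζ S.B ∧ (cornerGraph n m ω).Reachable ζ' S.A) := by
  have pA : (cornerGraph n m ω).Reachable S.A S.A' := S.adj_AA'.reachable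
  have pB : (cornerGraph n m ω).Reachable S.B S.B' := S.adj_BB'.reachable
  obtain ⟨W⟩ := h
  induction W with
  | nil => exact Or.inl (Reachable.refl _)
  | cons hadj W ih =>
    rcases S.corner_adj_cases hadj with hgood | hbad
    · have hstep := hgood.reachable
      rcases ih with h3 | ⟨h3, h4⟩ | ⟨h3, h4⟩
      · exact Or.inl (hstep.trans h3)
      · exact Or.inr (Or.inl ⟨hstep.trans h3, h4⟩)
      · exact Or.inr (Or.inr ⟨hstep.trans h3, h4⟩)
    · rcases hbad with ⟨h1, h2⟩ | ⟨h1, h2⟩ | ⟨h1, h2⟩ | ⟨h1, h2⟩ <;> subst h1 <;> rw [h2] at ih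
      · -- ζ = A, next = B
        rcases ih with h3 | ⟨h3, h4⟩ | ⟨h3, h4⟩
        · exact Or.inr (Or.inl ⟨Reachable.refl _, h3.symm⟩)
        · exact Or.inl (h3.symm.trans h4.symm)
        · exact Or.inl h4.symm
      · -- ζ = B, next = A
        rcases ih with h3 | ⟨h3, h4⟩ | ⟨h3, h4⟩
        · exact Or.inr (Or.inr ⟨Reachable.refl _, h3.symm⟩)
        · exact Or.inl h4.symm
        · exact Or.inl (h3.symm.trans h4.symm)
      · -- ζ = A', next = B'
        rcases ih with h3 | ⟨h3, h4⟩ | ⟨h3, h4⟩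
        · exact Or.inr (Or.inl ⟨pA.symm, h3.symm.trans pB.symm⟩)
        · exact Or.inr (Or.inl ⟨pA.symm, h4⟩)
        · exact Or.inl (pA.symm.trans h4.symm)
      · -- ζ = B', next = A'
        rcases ih with h3 | ⟨h3, h4⟩ | ⟨h3, h4⟩
        · exact Or.inr (Or.inr ⟨pB.symm, h3.symm.trans pA.symm⟩)
        · exact Or.inl (pB.symm.trans h4.symm)
        · exact Or.inr (Or.inr ⟨pB.symm, h4⟩)

end Surg
end CornerAux
namespace CornerAux
open SimpleGraph
variable {n m : ℕ}

def rotInv (d : ℤ × ℤ) : ℤ × ℤ := (d.2, -1 - d.1)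

lemma rotInv_rot (d : ℤ × ℤ) : rotInv (rot d) = d := by
  apply Prod.ext <;> simp [rot, rotInv] <;> ring

lemma rot_rotInv (d : ℤ × ℤ) : rot (rotInv d) = d := by
  apply Prod.ext <;> simp [rot, rotInv] <;> ring

lemma offs_rotInv {d : ℤ × ℤ} (h : offs d) : offs (rotInv d) := by
  rcases h with h|h|h|h <;> rw [h] <;> simp [offs, rotInv, Prod.ext_iff] <;> omega

lemma sub_vdir (d : ℤ × ℤ) : d - vdir d = rotInv d := by
  apply Prod.ext <;> simp [vdir, rotInv] <;> ring

lemma vdir_rotInv_rotInv (d : ℤ × ℤ) : vdir (rotInv (rotInv d)) = - vdir d := by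
  apply Prod.ext <;> simp [vdir, rotInv] <;> ring

open Classical in
/-- one step of the interface rotation map on corners -/
noncomputable def Tnext (n m : ℕ) (ω : Sym2 (ℤ × ℤ) → Bool)
    (ζ : (ℤ × ℤ) × (ℤ × ℤ)) : (ℤ × ℤ) × (ℤ × ℤ) :=
  if (primalGraph n m ω).Adj ζ.1 (ζ.1 + vdir (ζ.2 - ζ.1)) then
    (ζ.1 + vdir (ζ.2 - ζ.1), ζ.2)
  else (ζ.1, ζ.1 + rot (ζ.2 - ζ.1))

open Classical in
noncomputable def Tprev (n m : ℕ) (ω : Sym2 (ℤ × ℤ) → Bool)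
    (ζ : (ℤ × ℤ) × (ℤ × ℤ)) : (ℤ × ℤ) × (ℤ × ℤ) :=
  if (primalGraph n m ω).Adj ζ.1 (ζ.1 + vdir (rotInv (ζ.2 - ζ.1))) then
    (ζ.1 + vdir (rotInv (ζ.2 - ζ.1)), ζ.2)
  else (ζ.1, ζ.1 + rotInv (ζ.2 - ζ.1))

section Tlemmas
variable {ω : Sym2 (ℤ × ℤ) → Bool}

lemma Tnext_pos {x d : ℤ × ℤ} (h : (primalGraph n m ω).Adj x (x + vdir d)) :
    Tnext n m ω (x, x + d) = (x + vdir d, x + d) := by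
  rw [Tnext]; dsimp only
  have hcond : (primalGraph n m ω).Adj x (x + vdir (x + d - x)) := by
    rw [add_sub_cancel_left]; exact h
  rw [if_pos hcond, add_sub_cancel_left]

lemma Tnext_neg {x d : ℤ × ℤ} (h : ¬ (primalGraph n m ω).Adj x (x + vdir d)) :
    Tnext n m ω (x, x + d) = (x, x + rot d) := by
  rw [Tnext]; dsimp only
  have hcond : ¬ (primalGraph n m ω).Adj x (x + vdir (x + d - x)) := by
    rw [add_sub_cancel_left]; exact h
  rw [if_neg hcond, add_sub_cancel_left]

lemma Tprev_Tnext (ω : Sym2 (ℤ × ℤ) → Bool) (ζ : (ℤ × ℤ) × (ℤ × ℤ)) :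
    Tprev n m ω (Tnext n m ω ζ) = ζ := by
  obtain ⟨x, y⟩ := ζ
  obtain ⟨d, rfl⟩ : ∃ d, y = x + d := ⟨y - x, by abel⟩
  have hd2 : x + d - (x + vdir d) = rotInv d := by
    rw [show x + d - (x + vdir d) = d - vdir d by abel, sub_vdir]
  by_cases h : (primalGraph n m ω).Adj x (x + vdir d)
  · rw [Tnext_pos h, Tprev]; dsimp only
    have hcond : (primalGraph n m ω).Adj (x + vdir d)
        (x + vdir d + vdir (rotInv (x + d - (x + vdir d)))) := by
      rw [hd2, vdir_rotInv_rotInv, show x + vdir d + -vdir d = x by abel]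
      exact h.symm
    rw [if_pos hcond, hd2, vdir_rotInv_rotInv, show x + vdir d + -vdir d = x by abel]
  · rw [Tnext_neg h, Tprev]; dsimp only
    have hcond : ¬ (primalGraph n m ω).Adj x (x + vdir (rotInv (x + rot d - x))) := by
      rw [add_sub_cancel_left, rotInv_rot]; exact h
    rw [if_neg hcond, add_sub_cancel_left, rotInv_rot]

lemma Tnext_injective (ω : Sym2 (ℤ × ℤ) → Bool) :
    Function.Injective (Tnext n m ω) := by
  intro a b h
  have := congrArg (Tprev n m ω) h
  rwa [Tprev_Tnext, Tprev_Tnext] at this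

lemma T_corner {ζ : (ℤ × ℤ) × (ℤ × ℤ)}
    (hc : isCorner n m ζ) : isCorner n m (Tnext n m ω ζ) := by
  obtain ⟨x, y⟩ := ζ
  obtain ⟨d, rfl⟩ : ∃ d, y = x + d := ⟨y - x, by abel⟩
  obtain ⟨hx, hyd, ho⟩ := isCorner_iff.mp hc
  rw [add_sub_cancel_left] at ho
  by_cases h : (primalGraph n m ω).Adj x (x + vdir d)
  · rw [Tnext_pos h, isCorner_iff]
    refine ⟨h.2.2.1, hyd, ?_⟩
    rw [show x + d - (x + vdir d) = d - vdir d by abel, sub_vdir]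
    exact offs_rotInv ho
  · rw [Tnext_neg h]
    exact isCorner_mk hx (offs_rot ho)

lemma T_adj {ζ : (ℤ × ℤ) × (ℤ × ℤ)}
    (hc : isCorner n m ζ) : (cornerGraph n m ω).Adj ζ (Tnext n m ω ζ) := by
  have hTc := T_corner (ω := ω) hc
  obtain ⟨x, y⟩ := ζ
  obtain ⟨d, rfl⟩ : ∃ d, y = x + d := ⟨y - x, by abel⟩
  obtain ⟨hx, hyd, ho⟩ := isCorner_iff.mp hc
  rw [add_sub_cancel_left] at ho
  have hvne : x ≠ x + vdir d := by
    intro hh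
    have h2 : x + (0 : ℤ × ℤ) = x + vdir d := by rwa [add_zero]
    exact vdir_ne_zero (add_left_cancel h2).symm
  by_cases h : (primalGraph n m ω).Adj x (x + vdir d)
  · rw [Tnext_pos h] at hTc ⊢
    refine ⟨?_, hc, hTc, Or.inl ⟨rfl, by exact h⟩⟩
    intro hh; exact hvne (congrArg Prod.fst hh)
  · rw [Tnext_neg h] at hTc ⊢
    have hrne : x + d ≠ x + rot d := by
      intro hh; exact rot_ne (add_left_cancel hh).symm
    refine ⟨?_, hc, hTc, Or.inr ⟨rfl, ?_⟩⟩
    · intro hh; exact hrne (congrArg Prod.snd hh)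
    · refine ⟨hrne, hyd, (isCorner_iff.mp hTc).2.1, stepAdj_flank ho, fun hint => ?_⟩
      dsimp only at hint ⊢
      unfold isInterior at hint
      rw [crossEdge_flank ho] at hint ⊢
      have hx2 : inPrimal n m (x + vdir d) := hint _ (by rw [Sym2.mem_iff]; right; rfl)
      by_contra hff
      exact h ⟨hvne, hx, hx2, stepAdj_vdir ho, by simpa using hff⟩

end Tlemmas

lemma corner_finite : {ζ : (ℤ × ℤ) × (ℤ × ℤ) | isCorner n m ζ}.Finite := by
  apply Set.Finite.subset
    (Set.Finite.prod
      (Set.Finite.prod (Set.finite_Icc (0:ℤ) n) (Set.finite_Icc (0:ℤ) m))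
      (Set.Finite.prod (Set.finite_Icc (-1:ℤ) n) (Set.finite_Icc (-1:ℤ) m)))
  rintro ⟨⟨x1, x2⟩, ⟨y1, y2⟩⟩ ⟨⟨a, b, c, d⟩, ⟨e, f, g, h⟩, -⟩
  simp only [Set.mem_prod, Set.mem_Icc]
  exact ⟨⟨⟨a, b⟩, ⟨c, d⟩⟩, ⟨⟨e, f⟩, ⟨g, h⟩⟩⟩

/-- every corner is periodic under the rotation map -/
lemma T_periodic (ω : Sym2 (ℤ × ℤ) → Bool) {ζ : (ℤ × ℤ) × (ℤ × ℤ)}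
    (hc : isCorner n m ζ) : ∃ k, 0 < k ∧ (Tnext n m ω)^[k] ζ = ζ := by
  have hpres : ∀ i, isCorner n m ((Tnext n m ω)^[i] ζ) := by
    intro i; induction i with
    | zero => exact hc
    | succ i ih => rw [Function.iterate_succ_apply']; exact T_corner ih
  have : ∃ i j, i ≠ j ∧ (Tnext n m ω)^[i] ζ = (Tnext n m ω)^[j] ζ := by
    haveI := (corner_finite (n := n) (m := m)).to_subtype
    obtain ⟨i, j, hij, hgij⟩ :=
      Finite.exists_ne_map_eq_of_infinite
        (fun i : ℕ => (⟨(Tnext n m ω)^[i] ζ, hpres i⟩ : {ζ | isCorner n m ζ}))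
    exact ⟨i, j, hij, by simpa using congrArg Subtype.val hgij⟩
  obtain ⟨i, j, hij, heq⟩ := this
  rcases Nat.lt_or_ge i j with hlt | hge
  · refine ⟨j - i, by omega, ?_⟩
    have h1 : (Tnext n m ω)^[i] ((Tnext n m ω)^[j-i] ζ) = (Tnext n m ω)^[i] ζ := by
      rw [← Function.iterate_add_apply]
      rw [show i + (j - i) = j by omega]
      exact heq.symm
    exact ((Tnext_injective ω).iterate i) h1
  · have hlt : j < i := by omega
    refine ⟨i - j, by omega, ?_⟩
    have h1 : (Tnext n m ω)^[j] ((Tnext n m ω)^[i-j] ζ) = (Tnext n m ω)^[j] ζ := by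
      rw [← Function.iterate_add_apply]
      rw [show j + (i - j) = i by omega]
      exact heq
    exact ((Tnext_injective ω).iterate j) h1

end CornerAux
namespace CornerAux
open SimpleGraph
variable {n m : ℕ}
namespace Surg
variable {ω : Sym2 (ℤ × ℤ) → Bool} (S : Surg n m ω)

lemma e_swap : s(S.q, S.p) = S.e := by rw [e, Sym2.eq_swap]

lemma omega'_e : S.ω' S.e = false := close_self

lemma not_adj'_qp : ¬ (primalGraph n m S.ω').Adj S.q S.p := by
  intro hA
  have h5 := hA.2.2.2.2
  rw [S.e_swap, S.omega'_e] at h5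
  exact Bool.false_ne_true h5

lemma a_eq : S.a = S.q + rotInv S.d1 := S.a_eq_q_add

lemma b_eq : S.b = S.q + ((-1 - S.d1.1 : ℤ), -1 - S.d1.2) := S.b_eq_q_add

lemma Tnext_B' : Tnext n m S.ω' S.B' = S.A' := by
  have hB : S.B' = (S.q, S.q + ((-1 - S.d1.1 : ℤ), -1 - S.d1.2)) := by
    rw [B', S.b_eq]
  have hvd : vdir ((-1 - S.d1.1 : ℤ), -1 - S.d1.2) = - vdir S.d1 := by
    apply Prod.ext <;> simp [vdir] <;> ring
  have hqp : S.q + -vdir S.d1 = S.p := by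
    show S.p + vdir S.d1 + -vdir S.d1 = S.p; abel
  have hcond : ¬ (primalGraph n m S.ω').Adj S.q
      (S.q + vdir ((-1 - S.d1.1 : ℤ), -1 - S.d1.2)) := by
    rw [hvd, hqp]; exact S.not_adj'_qp
  rw [hB, Tnext_neg hcond]
  have hrot : rot ((-1 - S.d1.1 : ℤ), -1 - S.d1.2) = rotInv S.d1 := by
    apply Prod.ext <;> simp [rot, rotInv] <;> ring
  rw [hrot, A', S.a_eq]

lemma TA'_ne_B' : Tnext n m S.ω' S.A' ≠ S.B' := by
  have hA : S.A' = (S.q, S.q + rotInv S.d1) := by rw [A', S.a_eq]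
  rw [hA]
  by_cases h : (primalGraph n m S.ω').Adj S.q (S.q + vdir (rotInv S.d1))
  · rw [Tnext_pos h]
    intro hh
    have h2 := congrArg Prod.snd hh
    simp only [B'] at h2
    rw [← S.a_eq] at h2
    exact S.a_ne_b h2
  · rw [Tnext_neg h, rot_rotInv]
    intro hh
    have h2 := congrArg Prod.snd hh
    simp only [B'] at h2
    rw [S.b_eq] at h2
    have h3 := add_left_cancel h2
    rw [Prod.ext_iff] at h3
    omega

/-- the key merge lemma : if `e` is a bridge, closing it still leaves
its four corners connected, through the interface loop around the `q`-side. -/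
lemma bridge_reach (hbr : ¬ (primalGraph n m S.ω').Reachable S.p S.q) :
    (cornerGraph n m ω).Reachable S.A' S.B' := by
  obtain ⟨k, hk0, hkper⟩ := T_periodic S.ω' S.cornerA'
  have hkB : (Tnext n m S.ω')^[k-1] S.A' = S.B' := by
    apply Tnext_injective S.ω'
    have h1 : Tnext n m S.ω' ((Tnext n m S.ω')^[k-1] S.A') = (Tnext n m S.ω')^[k] S.A' := by
      rw [← Function.iterate_succ_apply' (Tnext n m S.ω') (k-1) S.A', show (k-1).succ = k by omega]
    rw [h1, hkper, S.Tnext_B']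
  have hex : ∃ j, (Tnext n m S.ω')^[j] S.A' = S.B' := ⟨k - 1, hkB⟩
  classical
  set j := Nat.find hex with hjdef
  have hj : (Tnext n m S.ω')^[j] S.A' = S.B' := Nat.find_spec hex
  have hjmin : ∀ i < j, (Tnext n m S.ω')^[i] S.A' ≠ S.B' := fun i hi => Nat.find_min hex hi
  have hcor : ∀ i, isCorner n m ((Tnext n m S.ω')^[i] S.A') := by
    intro i; induction i with
    | zero => exact S.cornerA'
    | succ i ih => rw [Function.iterate_succ_apply']; exact T_corner ih
  have hreach' : ∀ i, (cornerGraph n m S.ω').Reachable S.A' ((Tnext n m S.ω')^[i] S.A') := by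
    intro i; induction i with
    | zero => exact Reachable.refl _
    | succ i ih =>
      rw [Function.iterate_succ_apply']
      exact ih.trans (T_adj (hcor i)).reachable
  have hnotAB : ∀ i, (Tnext n m S.ω')^[i] S.A' ≠ S.A ∧ (Tnext n m S.ω')^[i] S.A' ≠ S.B := by
    intro i
    have h2 := (corner_reach_proj (hreach' i)).1
    constructor <;> intro hEq <;> rw [hEq] at h2 <;> exact hbr h2.symm
  have main : ∀ i, i ≤ j →
      (cornerGraph n m ω).Reachable S.A' ((Tnext n m S.ω')^[i] S.A') := by
    intro i
    induction i with
    | zero => intro _; exact Reachable.refl _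
    | succ i ih =>
      intro hi1
      have prev := ih (by omega)
      have hstep' := T_adj (ω := S.ω') (hcor i)
      rw [Function.iterate_succ_apply']
      rcases S.corner_adj_cases hstep' with hgood | hbad
      · exact prev.trans hgood.reachable
      · exfalso
        rcases hbad with ⟨h1, h2⟩ | ⟨h1, h2⟩ | ⟨h1, h2⟩ | ⟨h1, h2⟩
        · exact (hnotAB i).1 h1
        · exact (hnotAB i).2 h1
        · exact S.TA'_ne_B' (by rw [← h1]; exact h2)
        · exact hjmin i (by omega) h1
  exact hj ▸ main j le_rfl

lemma bridge_AB (hbr : ¬ (primalGraph n m S.ω').Reachable S.p S.q) :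
    (cornerGraph n m ω).Reachable S.A S.B :=
  (S.adj_AA'.reachable).trans ((S.bridge_reach hbr).trans S.adj_BB'.reachable.symm)

lemma bridge_ab_dual (hbr : ¬ (primalGraph n m S.ω').Reachable S.p S.q) :
    (dualGraph n m ω).Reachable S.a S.b :=
  (corner_reach_proj (S.bridge_AB hbr)).2

end Surg
end CornerAux
namespace CornerAux
open SimpleGraph
variable {n m : ℕ}

noncomputable def cpar (u t : (ℤ × ℤ) × (ℤ × ℤ)) : ZMod 2 :=
  if crossEdge t.1 t.2 = s(u.1, u.2) then 1 else 0

noncomputable def chi (z : ℤ × ℤ) (t : (ℤ × ℤ) × (ℤ × ℤ)) : ZMod 2 :=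
  if t.1.2 = t.2.2 ∧ max t.1.1 t.2.1 = z.1 ∧ t.1.2 < z.2 then 1 else 0

noncomputable def psi (u : (ℤ × ℤ) × (ℤ × ℤ)) (y : ℤ × ℤ) : ZMod 2 :=
  if u.1.2 = u.2.2 ∧ y.1 = min u.1.1 u.2.1 ∧ y.2 < u.1.2 then 1 else 0

set_option maxHeartbeats 2000000 in
lemma cpar_id {z z' y y' : ℤ × ℤ} (hz : stepAdj z z') (hy : stepAdj y y') :
    cpar (z, z') (y, y') =
      (chi z (y, y') + chi z' (y, y')) + (psi (z, z') y + psi (z, z') y') := by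
  unfold cpar chi psi
  rcases hz with ⟨a1, a2⟩ | ⟨a1, a2⟩ <;>
    rcases (abs_eq (by norm_num : (0:ℤ) ≤ 1)).mp a2 with a3 | a3 <;>
    rcases hy with ⟨b1, b2⟩ | ⟨b1, b2⟩ <;>
    rcases (abs_eq (by norm_num : (0:ℤ) ≤ 1)).mp b2 with b3 | b3 <;>
    (first
      | rw [crossEdge, if_pos b1]
      | rw [crossEdge, if_neg (by omega : ¬ y.1 = y'.1)]) <;>
    simp only [Sym2.eq_iff, Prod.mk.injEq, Prod.ext_iff] <;>
    split_ifs <;> first | decide | omega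

def pairsL (l : List (ℤ × ℤ)) : List ((ℤ × ℤ) × (ℤ × ℤ)) := l.zip l.tail

lemma pairsL_cons2 (a b : ℤ × ℤ) (l : List (ℤ × ℤ)) :
    pairsL (a :: b :: l) = (a, b) :: pairsL (b :: l) := rfl

lemma pairsL_concat : ∀ (l : List (ℤ × ℤ)) (hne : l ≠ []) (x : ℤ × ℤ),
    pairsL (l ++ [x]) = pairsL l ++ [(l.getLast hne, x)] := by
  intro l
  induction l with
  | nil => intro h; exact absurd rfl h
  | cons a l ih =>
    intro _ x
    cases l with
    | nil => rfl
    | cons b t =>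
      have h2 : ((a :: b :: t) ++ [x]) = a :: ((b :: t) ++ [x]) := rfl
      rw [h2, show (b :: t) ++ [x] = b :: (t ++ [x]) from rfl]
      rw [pairsL_cons2, show b :: (t ++ [x]) = (b :: t) ++ [x] from rfl]
      rw [ih (by simp) x, pairsL_cons2]
      simp [List.getLast_cons]

lemma pairs_rel {R : (ℤ × ℤ) → (ℤ × ℤ) → Prop} :
    ∀ {l : List (ℤ × ℤ)}, List.Chain' R l → ∀ p ∈ pairsL l, R p.1 p.2 := by
  intro l
  induction l with
  | nil => intro _ p hp; simp [pairsL] at hp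
  | cons a l ih =>
    intro hch p hp
    cases l with
    | nil => simp [pairsL] at hp
    | cons b t =>
      rw [pairsL_cons2] at hp
      rcases List.mem_cons.mp hp with rfl | hp2
      · exact (List.isChain_cons_cons.mp hch).1
      · exact ih (List.isChain_cons_cons.mp hch).2 p hp2

lemma zmod2_self (a : ZMod 2) : a + a = 0 := by revert a; decide

lemma tele (f : ℤ × ℤ → ZMod 2) :
    ∀ (l : List (ℤ × ℤ)) (y0 : ℤ × ℤ),
      ((pairsL (y0 :: l)).map (fun u => f u.1 + f u.2)).sum
        = f y0 + f ((y0 :: l).getLast (List.cons_ne_nil _ _)) := by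
  intro l
  induction l with
  | nil =>
    intro y0
    show (0 : ZMod 2) = _
    rw [List.getLast_singleton]
    exact (zmod2_self _).symm
  | cons y1 l ih =>
    intro y0
    rw [pairsL_cons2, List.map_cons, List.sum_cons, ih y1,
      List.getLast_cons (List.cons_ne_nil _ _)]
    generalize f y0 = P1
    generalize f y1 = P2
    generalize f ((y1 :: l).getLast (List.cons_ne_nil _ _)) = P3
    revert P1 P2 P3
    decide

lemma sum_map_add (f g : ((ℤ × ℤ) × (ℤ × ℤ)) → ZMod 2) :
    ∀ l : List ((ℤ × ℤ) × (ℤ × ℤ)),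
      (l.map (fun t => f t + g t)).sum = (l.map f).sum + (l.map g).sum := by
  intro l
  induction l with
  | nil => simp
  | cons a l ih => simp [ih]; ring

lemma total_zero {zs ys : List (ℤ × ℤ)} (hzs : zs ≠ []) (hys : ys ≠ [])
    (hchz : List.Chain' stepAdj zs) (hchy : List.Chain' stepAdj ys)
    (hclz : zs.head hzs = zs.getLast hzs) (hcly : ys.head hys = ys.getLast hys) :
    ((pairsL zs).map (fun u => ((pairsL ys).map (cpar u)).sum)).sum = 0 := by
  obtain ⟨y0, ty, rfl⟩ : ∃ y0 ty, ys = y0 :: ty := by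
    cases ys with
    | nil => exact absurd rfl hys
    | cons a t => exact ⟨a, t, rfl⟩
  have hylast : (y0 :: ty).getLast (List.cons_ne_nil _ _) = y0 := by
    rw [← hcly]; rfl
  have claim1 : ∀ u ∈ pairsL zs,
      ((pairsL (y0 :: ty)).map (cpar u)).sum
        = ((pairsL (y0 :: ty)).map (fun t => chi u.1 t)).sum
          + ((pairsL (y0 :: ty)).map (fun t => chi u.2 t)).sum := by
    intro u hu
    have hsu : stepAdj u.1 u.2 := pairs_rel hchz u hu
    have hpt : ∀ t ∈ pairsL (y0 :: ty), cpar u t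
        = (fun t => chi u.1 t + chi u.2 t) t + (fun t => psi u t.1 + psi u t.2) t := by
      intro t ht
      have hst : stepAdj t.1 t.2 := pairs_rel hchy t ht
      have h2 : cpar (u.1, u.2) (t.1, t.2) =
          (chi u.1 (t.1, t.2) + chi u.2 (t.1, t.2)) + (psi (u.1, u.2) t.1 + psi (u.1, u.2) t.2) :=
        cpar_id hsu hst
      simpa using h2
    rw [List.map_congr_left hpt, sum_map_add, sum_map_add]
    rw [tele (fun y => psi u y) ty y0, hylast, zmod2_self, add_zero]
  rw [List.map_congr_left claim1]
  obtain ⟨z0, tz, rfl⟩ : ∃ z0 tz, zs = z0 :: tz := by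
    cases zs with
    | nil => exact absurd rfl hzs
    | cons a t => exact ⟨a, t, rfl⟩
  have hzlast : (z0 :: tz).getLast (List.cons_ne_nil _ _) = z0 := by
    rw [← hclz]; rfl
  rw [tele (fun z => ((pairsL (y0 :: ty)).map (fun t => chi z t)).sum) tz z0, hzlast,
    zmod2_self]

/-- an open dual edge never crosses an open primal edge -/
lemma cross_ne_open {ω : Sym2 (ℤ × ℤ) → Bool} {y y' z z' : ℤ × ℤ}
    (hdu : (dualGraph n m ω).Adj y y') (hpz : (primalGraph n m ω).Adj z z') :
    crossEdge y y' ≠ s(z, z') := by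
  intro h
  have hint : isInterior n m y y' := by
    rw [isInterior, h]
    intro v hv
    rcases Sym2.mem_iff.mp hv with rfl | rfl
    · exact hpz.2.1
    · exact hpz.2.2.1
  have h5 := hdu.2.2.2.2 hint
  rw [h] at h5
  rw [hpz.2.2.2.2] at h5
  exact absurd h5 (by decide)

end CornerAux
namespace CornerAux
open SimpleGraph
variable {n m : ℕ}
namespace Surg
variable {ω : Sym2 (ℤ × ℤ) → Bool} (S : Surg n m ω)

/-- the parity lemma : if `p` and `q` are joined off `e`, the flanking dual vertices
of `e` cannot be joined in the dual graph of `ω`. -/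
lemma lemmaX (hpq' : (primalGraph n m S.ω').Reachable S.p S.q) :
    ¬ (dualGraph n m ω).Reachable S.a S.b := by
  intro hab
  obtain ⟨W⟩ := hpq'
  obtain ⟨Q⟩ := hab
  have hlzne : W.support ≠ [] := W.support_ne_nil
  have hlyne : Q.support ≠ [] := Q.support_ne_nil
  have hzsne : W.support ++ [S.p] ≠ [] := by simp
  have hysne : Q.support ++ [S.a] ≠ [] := by simp
  have hqlast : W.support.getLast hlzne = S.q := by
    have := W.getLast_support
    convert this using 2
  have hblast : Q.support.getLast hlyne = S.b := by
    have := Q.getLast_support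
    convert this using 2
  have hphead : W.support.head hlzne = S.p := by
    have := W.head_support
    convert this using 2
  have hahead : Q.support.head hlyne = S.a := by
    have := Q.head_support
    convert this using 2
  -- chains
  have hchz : List.Chain' stepAdj (W.support ++ [S.p]) := by
    unfold List.Chain'; rw [List.isChain_append]
    refine ⟨(W.isChain_adj_support).imp (fun a b hab2 => hab2.2.2.2.1), List.isChain_singleton _, ?_⟩
    intro x hx y hy
    rw [List.getLast?_eq_getLast_of_ne_nil hlzne] at hx
    simp only [Option.mem_def, Option.some.injEq] at hx
    simp only [List.head?_cons, Option.mem_def, Option.some.injEq] at hy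
    subst hx; subst hy
    rw [hqlast]
    exact S.stepAdj_pq.symm
  have hchy : List.Chain' stepAdj (Q.support ++ [S.a]) := by
    unfold List.Chain'; rw [List.isChain_append]
    refine ⟨(Q.isChain_adj_support).imp (fun a b hab2 => hab2.2.2.2.1), List.isChain_singleton _, ?_⟩
    intro x hx y hy
    rw [List.getLast?_eq_getLast_of_ne_nil hlyne] at hx
    simp only [Option.mem_def, Option.some.injEq] at hx
    simp only [List.head?_cons, Option.mem_def, Option.some.injEq] at hy
    subst hx; subst hy
    rw [hblast]
    exact S.stepAdj_ab.symm
  -- closedness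
  have hclz : (W.support ++ [S.p]).head hzsne = (W.support ++ [S.p]).getLast hzsne := by
    rw [List.getLast_append_singleton, List.head_append_of_ne_nil hlzne, hphead]
  have hcly : (Q.support ++ [S.a]).head hysne = (Q.support ++ [S.a]).getLast hysne := by
    rw [List.getLast_append_singleton, List.head_append_of_ne_nil hlyne, hahead]
  have h0 := total_zero hzsne hysne hchz hchy hclz hcly
  -- now compute the total directly
  rw [pairsL_concat _ hlzne, hqlast, List.map_append, List.sum_append] at h0
  have hys : pairsL (Q.support ++ [S.a]) = pairsL Q.support ++ [(S.b, S.a)] := by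
    rw [pairsL_concat _ hlyne, hblast]
  -- the part over the walk edges vanishes
  have hmain : ∀ u ∈ pairsL W.support, ((pairsL (Q.support ++ [S.a])).map (cpar u)).sum = 0 := by
    intro u hu
    have huadj : (primalGraph n m S.ω').Adj u.1 u.2 := pairs_rel W.isChain_adj_support u hu
    rw [hys, List.map_append, List.sum_append]
    have h1 : ∀ t ∈ pairsL Q.support, cpar u t = 0 := by
      intro t ht
      have htadj : (dualGraph n m ω).Adj t.1 t.2 := pairs_rel Q.isChain_adj_support t ht
      unfold cpar
      rw [if_neg (cross_ne_open htadj (primal_close_le huadj))]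
    rw [List.sum_eq_zero (by intro x hx; obtain ⟨t, ht, rfl⟩ := List.mem_map.mp hx; exact h1 t ht)]
    have h2 : cpar u (S.b, S.a) = 0 := by
      unfold cpar
      dsimp only
      rw [← crossEdge_symm S.stepAdj_ab, S.crossEdge_ab]
      refine if_neg (fun hEq => ?_)
      have h5 := huadj.2.2.2.2
      rw [← hEq, S.omega'_e] at h5
      exact absurd h5 (by decide)
    simp [h2]
  rw [List.sum_eq_zero (by intro x hx; obtain ⟨u, hu, rfl⟩ := List.mem_map.mp hx; exact hmain u hu)] at h0
  -- the closing-step inner sum equals 1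
  have hclose : ((pairsL (Q.support ++ [S.a])).map (cpar (S.q, S.p))).sum = 1 := by
    rw [hys, List.map_append, List.sum_append]
    have h1 : ∀ t ∈ pairsL Q.support, cpar (S.q, S.p) t = 0 := by
      intro t ht
      have htadj : (dualGraph n m ω).Adj t.1 t.2 := pairs_rel Q.isChain_adj_support t ht
      unfold cpar
      dsimp only
      refine if_neg (fun hEq => ?_)
      rw [Sym2.eq_swap] at hEq
      exact cross_ne_open htadj S.primal_adj_pq hEq
    rw [List.sum_eq_zero (by intro x hx; obtain ⟨t, ht, rfl⟩ := List.mem_map.mp hx; exact h1 t ht)]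
    have h2 : cpar (S.q, S.p) (S.b, S.a) = 1 := by
      unfold cpar
      dsimp only
      rw [← crossEdge_symm S.stepAdj_ab, S.crossEdge_ab, if_pos]
      rw [e, Sym2.eq_swap]
    simp [h2]
  simp only [List.map_cons, List.map_nil, List.sum_cons, List.sum_nil] at h0
  rw [hclose] at h0
  simp at h0
end Surg
end CornerAux
namespace CornerAux
open SimpleGraph
variable {n m : ℕ}

section Base
variable {ω : Sym2 (ℤ × ℤ) → Bool}
variable (hall : ∀ p q : ℤ × ℤ, inPrimal n m p → inPrimal n m q → stepAdj p q →
  ω s(p, q) = false)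

include hall

lemma base_primal_eq {u v : ℤ × ℤ} (h : (primalGraph n m ω).Reachable u v) : u = v := by
  obtain ⟨W⟩ := h
  cases W with
  | nil => rfl
  | cons hadj W =>
    exfalso
    obtain ⟨h1, h2, h3, h4, h5⟩ := hadj
    rw [hall _ _ h2 h3 h4] at h5
    exact absurd h5 (by decide)

lemma base_rot_step {x d : ℤ × ℤ} (hx : inPrimal n m x) (hd : offs d) :
    (cornerGraph n m ω).Adj (x, x + d) (x, x + rot d) := by
  have hnadj : ¬ (primalGraph n m ω).Adj x (x + vdir d) := by
    rintro ⟨h1, h2, h3, h4, h5⟩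
    rw [hall _ _ h2 h3 h4] at h5
    exact absurd h5 (by decide)
  have h := T_adj (ω := ω) (isCorner_mk hx hd)
  rwa [Tnext_neg hnadj] at h

lemma base_corner_reach {x : ℤ × ℤ} {d d' : ℤ × ℤ} (hx : inPrimal n m x)
    (hd : offs d) (hd' : offs d') :
    (cornerGraph n m ω).Reachable (x, x + d) (x, x + d') := by
  -- reach the NE corner from any corner
  have key : ∀ d₀ : ℤ × ℤ, offs d₀ →
      (cornerGraph n m ω).Reachable (x, x + d₀) (x, x + ((0:ℤ), (0:ℤ))) := by
    intro d₀ hd₀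
    have s1 : ∀ d₁ : ℤ × ℤ, offs d₁ →
        (cornerGraph n m ω).Reachable (x, x + d₁) (x, x + rot d₁) :=
      fun d₁ hd₁ => (base_rot_step hall hx hd₁).reachable
    rcases hd₀ with h|h|h|h <;> subst h
    · exact Reachable.refl _
    · have h1 := s1 _ (show offs ((-1:ℤ),(0:ℤ)) by simp [offs])
      have h2 := s1 _ (show offs ((-1:ℤ),(-1:ℤ)) by simp [offs])
      have h3 := s1 _ (show offs ((0:ℤ),(-1:ℤ)) by simp [offs])
      rw [show rot ((-1:ℤ),(0:ℤ)) = ((-1:ℤ),(-1:ℤ)) by decide] at h1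
      rw [show rot ((-1:ℤ),(-1:ℤ)) = ((0:ℤ),(-1:ℤ)) by decide] at h2
      rw [show rot ((0:ℤ),(-1:ℤ)) = ((0:ℤ),(0:ℤ)) by decide] at h3
      exact h1.trans (h2.trans h3)
    · have h2 := s1 _ (show offs ((-1:ℤ),(-1:ℤ)) by simp [offs])
      have h3 := s1 _ (show offs ((0:ℤ),(-1:ℤ)) by simp [offs])
      rw [show rot ((-1:ℤ),(-1:ℤ)) = ((0:ℤ),(-1:ℤ)) by decide] at h2
      rw [show rot ((0:ℤ),(-1:ℤ)) = ((0:ℤ),(0:ℤ)) by decide] at h3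
      exact h2.trans h3
    · have h3 := s1 _ (show offs ((0:ℤ),(-1:ℤ)) by simp [offs])
      rw [show rot ((0:ℤ),(-1:ℤ)) = ((0:ℤ),(0:ℤ)) by decide] at h3
      exact h3
  exact (key d hd).trans (key d' hd').symm

omit hall in
lemma crossEdge_step {w w' : ℤ × ℤ} (hs : stepAdj w w') :
    ∃ c1 c2 : ℤ × ℤ, crossEdge w w' = s(c1, c2) ∧ stepAdj c1 c2 := by
  unfold crossEdge
  by_cases h : w.1 = w'.1
  · rw [if_pos h]
    exact ⟨_, _, rfl, Or.inr ⟨rfl, by simp⟩⟩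
  · rw [if_neg h]
    exact ⟨_, _, rfl, Or.inl ⟨rfl, by simp⟩⟩

lemma base_dual_adj {w w' : ℤ × ℤ} (hw : inDual n m w) (hw' : inDual n m w')
    (hs : stepAdj w w') (hne : w ≠ w') : (dualGraph n m ω).Adj w w' := by
  refine ⟨hne, hw, hw', hs, fun hint => ?_⟩
  obtain ⟨c1, c2, hce, hcs⟩ := crossEdge_step hs
  unfold isInterior at hint
  rw [hce] at hint ⊢
  have h1 : inPrimal n m c1 := hint _ (by rw [Sym2.mem_iff]; left; rfl)
  have h2 : inPrimal n m c2 := hint _ (by rw [Sym2.mem_iff]; right; rfl)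
  exact hall _ _ h1 h2 hcs

lemma base_dual_reach_horiz : ∀ (k : ℕ) (w w' : ℤ × ℤ), inDual n m w → inDual n m w' →
    w.2 = w'.2 → (w'.1 - w.1).natAbs = k → (dualGraph n m ω).Reachable w w' := by
  intro k
  induction k with
  | zero =>
    intro w w' hw hw' h2 hk
    have : w = w' := Prod.ext (by omega) h2
    rw [this]
  | succ k ih =>
    intro w w' hw hw' h2 hk
    have hne1 : w.1 ≠ w'.1 := by omega
    set s : ℤ := if w.1 < w'.1 then 1 else -1 with hs
    have hw'' : inDual n m (w.1 + s, w.2) := by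
      obtain ⟨a1, a2, a3, a4⟩ := hw
      obtain ⟨b1, b2, b3, b4⟩ := hw'
      refine ⟨?_, ?_, a3, a4⟩ <;> dsimp only <;> split_ifs at hs ⊢ <;> omega
    have hadj : (dualGraph n m ω).Adj w (w.1 + s, w.2) := by
      refine base_dual_adj hall hw hw'' (Or.inr ⟨rfl, ?_⟩) ?_
      · dsimp only; split_ifs at hs <;> simp [hs] <;> omega
      · intro hh
        have := congrArg Prod.fst hh
        dsimp at this
        split_ifs at hs <;> omega
    refine hadj.reachable.trans (ih (w.1 + s, w.2) w' hw'' hw' h2 ?_)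
    dsimp only
    split_ifs at hs <;> omega

lemma base_dual_reach_vert : ∀ (k : ℕ) (w w' : ℤ × ℤ), inDual n m w → inDual n m w' →
    w.1 = w'.1 → (w'.2 - w.2).natAbs = k → (dualGraph n m ω).Reachable w w' := by
  intro k
  induction k with
  | zero =>
    intro w w' hw hw' h2 hk
    have : w = w' := Prod.ext h2 (by omega)
    rw [this]
  | succ k ih =>
    intro w w' hw hw' h2 hk
    set s : ℤ := if w.2 < w'.2 then 1 else -1 with hs
    have hw'' : inDual n m (w.1, w.2 + s) := by
      obtain ⟨a1, a2, a3, a4⟩ := hw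
      obtain ⟨b1, b2, b3, b4⟩ := hw'
      refine ⟨a1, a2, ?_, ?_⟩ <;> dsimp only <;> split_ifs at hs ⊢ <;> omega
    have hadj : (dualGraph n m ω).Adj w (w.1, w.2 + s) := by
      refine base_dual_adj hall hw hw'' (Or.inl ⟨rfl, ?_⟩) ?_
      · dsimp only; split_ifs at hs <;> simp [hs] <;> omega
      · intro hh
        have := congrArg Prod.snd hh
        dsimp at this
        split_ifs at hs <;> omega
    refine hadj.reachable.trans (ih (w.1, w.2 + s) w' hw'' hw' h2 ?_)
    dsimp only
    split_ifs at hs <;> omega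

lemma base_dual_connected {w w' : ℤ × ℤ} (hw : inDual n m w) (hw' : inDual n m w') :
    (dualGraph n m ω).Reachable w w' := by
  have hmid : inDual n m (w'.1, w.2) := ⟨hw'.1, hw'.2.1, hw.2.2.1, hw.2.2.2⟩
  exact (base_dual_reach_horiz hall _ w (w'.1, w.2) hw hmid rfl rfl).trans
    (base_dual_reach_vert hall _ (w'.1, w.2) w' hmid hw' rfl rfl)

end Base
end CornerAux
namespace CornerAux
open SimpleGraph
variable {n m : ℕ}

open Classical in
noncomputable def openEdges (n m : ℕ) (ω : Sym2 (ℤ × ℤ) → Bool) : Finset (Sym2 (ℤ × ℤ)) :=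
  ((((Finset.Icc (0:ℤ) (n:ℤ)) ×ˢ (Finset.Icc (0:ℤ) (m:ℤ))) ×ˢ
    ((Finset.Icc (0:ℤ) (n:ℤ)) ×ˢ (Finset.Icc (0:ℤ) (m:ℤ)))).filter
      (fun pq => stepAdj pq.1 pq.2 ∧ ω s(pq.1, pq.2) = true)).image
        (fun pq => s(pq.1, pq.2))

lemma mem_openEdges {ω : Sym2 (ℤ × ℤ) → Bool} {u v : ℤ × ℤ} (h2 : inPrimal n m u)
    (h3 : inPrimal n m v) (h4 : stepAdj u v) (h5 : ω s(u, v) = true) :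
    s(u, v) ∈ openEdges n m ω := by
  classical
  unfold openEdges
  apply Finset.mem_image.mpr
  refine ⟨(u, v), ?_, rfl⟩
  rw [Finset.mem_filter]
  refine ⟨?_, h4, h5⟩
  simp only [Finset.mem_product, Finset.mem_Icc]
  exact ⟨⟨⟨h2.1, h2.2.1⟩, h2.2.2.1, h2.2.2.2⟩, ⟨⟨h3.1, h3.2.1⟩, h3.2.2.1, h3.2.2.2⟩⟩

lemma openEdges_spec {ω : Sym2 (ℤ × ℤ) → Bool} {E : Sym2 (ℤ × ℤ)}
    (h : E ∈ openEdges n m ω) :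
    ∃ p q : ℤ × ℤ, E = s(p, q) ∧ inPrimal n m p ∧ inPrimal n m q ∧ stepAdj p q ∧
      ω E = true := by
  classical
  unfold openEdges at h
  obtain ⟨pq, hmem, rfl⟩ := Finset.mem_image.mp h
  rw [Finset.mem_filter] at hmem
  obtain ⟨hbox, h4, h5⟩ := hmem
  simp only [Finset.mem_product, Finset.mem_Icc] at hbox
  exact ⟨pq.1, pq.2, rfl, ⟨hbox.1.1.1, hbox.1.1.2, hbox.1.2.1, hbox.1.2.2⟩,
    ⟨hbox.2.1.1, hbox.2.1.2, hbox.2.2.1, hbox.2.2.2⟩, h4, h5⟩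

lemma card_close_lt {ω : Sym2 (ℤ × ℤ) → Bool} {E : Sym2 (ℤ × ℤ)}
    (hE : E ∈ openEdges n m ω) :
    (openEdges n m (close ω E)).card < (openEdges n m ω).card := by
  apply Finset.card_lt_card
  have hsub : openEdges n m (close ω E) ⊆ openEdges n m ω := by
    intro F hF
    obtain ⟨p, q, rfl, hp, hq, hs, ho⟩ := openEdges_spec hF
    exact mem_openEdges hp hq hs (close_le ho)
  rw [Finset.ssubset_iff_of_subset hsub]
  refine ⟨E, hE, fun hmem => ?_⟩
  obtain ⟨p, q, rfl, hp, hq, hs, ho⟩ := openEdges_spec hmem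
  rw [close_self] at ho
  exact absurd ho (by decide)

def THMp (n m : ℕ) (ω : Sym2 (ℤ × ℤ) → Bool) : Prop :=
  ∀ u₁ w₁ u₂ w₂ : ℤ × ℤ, isCorner n m (u₁, w₁) → isCorner n m (u₂, w₂) →
    (primalGraph n m ω).Reachable u₁ u₂ → (dualGraph n m ω).Reachable w₁ w₂ →
    (cornerGraph n m ω).Reachable (u₁, w₁) (u₂, w₂)

def DUCp (n m : ℕ) (ω : Sym2 (ℤ × ℤ) → Bool) : Prop :=
  ∀ w w' : ℤ × ℤ, inDual n m w → inDual n m w' → (dualGraph n m ω).Reachable w w'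

def ABp (n m : ℕ) (ω : Sym2 (ℤ × ℤ) → Bool) : Prop :=
  ∀ S : Surg n m ω, ¬ (primalGraph n m S.ω').Reachable S.p S.q

lemma base_all {ω : Sym2 (ℤ × ℤ) → Bool}
    (hall : ∀ p q : ℤ × ℤ, inPrimal n m p → inPrimal n m q → stepAdj p q →
      ω s(p, q) = false) :
    THMp n m ω ∧ DUCp n m ω := by
  constructor
  · intro u₁ w₁ u₂ w₂ hc1 hc2 hRp hRd
    have heq := base_primal_eq hall hRp
    subst heq
    obtain ⟨hx, hw1d, ho1⟩ := isCorner_iff.mp hc1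
    obtain ⟨-, hw2d, ho2⟩ := isCorner_iff.mp hc2
    have e1 : u₁ + (w₁ - u₁) = w₁ := by abel
    have e2 : u₁ + (w₂ - u₁) = w₂ := by abel
    have h := base_corner_reach hall hx ho1 ho2
    rw [e1, e2] at h
    exact h
  · intro w w' hw hw'
    exact base_dual_connected hall hw hw'

theorem master : ∀ (k : ℕ) (ω : Sym2 (ℤ × ℤ) → Bool), (openEdges n m ω).card ≤ k →
    THMp n m ω ∧ (ABp n m ω → DUCp n m ω) := by
  intro k
  induction k with
  | zero =>
    intro ω hc
    have hall : ∀ p q : ℤ × ℤ, inPrimal n m p → inPrimal n m q → stepAdj p q →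
        ω s(p, q) = false := by
      intro p q hp hq hs
      cases hω : ω s(p, q) with
      | false => rfl
      | true =>
        exfalso
        have h1 := mem_openEdges hp hq hs hω
        have h2 := Finset.card_pos.mpr ⟨_, h1⟩
        omega
    exact ⟨(base_all hall).1, fun _ => (base_all hall).2⟩
  | succ k ih =>
    intro ω hc
    by_cases hbase : ∀ p q : ℤ × ℤ, inPrimal n m p → inPrimal n m q → stepAdj p q →
      ω s(p, q) = false
    · exact ⟨(base_all hbase).1, fun _ => (base_all hbase).2⟩
    · push_neg at hbase
      obtain ⟨p0, q0, hp0, hq0, hs0, hω0⟩ := hbase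
      have hω0' : ω s(p0, q0) = true := by
        cases h : ω s(p0, q0) with
        | false => exact absurd h hω0
        | true => rfl
      obtain ⟨d0, hd0, rfl⟩ := exists_offs_of_stepAdj hs0
      have hcard : ∀ S : Surg n m ω, (openEdges n m S.ω').card ≤ k := by
        intro S
        have h1 := card_close_lt (mem_openEdges S.hp S.hq S.stepAdj_pq S.hopen)
        have h2 : (openEdges n m S.ω').card < (openEdges n m ω).card := h1
        omega
      have hDUC : ABp n m ω → DUCp n m ω := by
        intro hAB
        have hbr := hAB ⟨p0, d0, hd0, hp0, hq0, hω0'⟩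
        set S0 : Surg n m ω := ⟨p0, d0, hd0, hp0, hq0, hω0'⟩ with hS0def
        have hab' : ABp n m S0.ω' := by
          intro S'
          intro hre
          have hopenω : ω s(S'.p, S'.p + vdir S'.d1) = true := close_le S'.hopen
          apply hAB ⟨S'.p, S'.d1, S'.hd, S'.hp, S'.hq, hopenω⟩
          refine hre.mono (primal_mono ?_)
          intro E hE
          have hEne : E ≠ S'.e := by
            intro hEq
            rw [hEq] at hE
            rw [show S'.ω' S'.e = false from close_self] at hE
            exact absurd hE (by decide)
          have h3 : S0.ω' E = true := by
            have := hE
            rw [show S'.ω' E = close S0.ω' S'.e E from rfl, close_eq_of_ne hEne] at this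
            exact this
          have hEne2 : E ≠ (⟨S'.p, S'.d1, S'.hd, S'.hp, S'.hq, hopenω⟩ : Surg n m ω).e := hEne
          rw [show (⟨S'.p, S'.d1, S'.hd, S'.hp, S'.hq, hopenω⟩ : Surg n m ω).ω' E
            = close ω (⟨S'.p, S'.d1, S'.hd, S'.hp, S'.hq, hopenω⟩ : Surg n m ω).e E from rfl,
            close_eq_of_ne hEne2]
          exact close_le h3
        have hduc' := (ih S0.ω' (hcard S0)).2 hab'
        have habdual := S0.bridge_ab_dual hbr
        intro w w' hw hw'
        exact S0.dual_patch habdual (hduc' w w' hw hw')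
      refine ⟨?_, hDUC⟩
      intro u₁ w₁ u₂ w₂ hc1 hc2 hRp hRd
      by_cases hnb : ∃ S : Surg n m ω, (primalGraph n m S.ω').Reachable S.p S.q
      · obtain ⟨S, hpq'⟩ := hnb
        have hRp' := S.primal_reach_close hpq' hRp
        have hRd' : (dualGraph n m S.ω').Reachable w₁ w₂ := hRd.mono dual_le_close
        have hR' := (ih S.ω' (hcard S)).1 u₁ w₁ u₂ w₂ hc1 hc2 hRp' hRd'
        rcases S.lemmaW hR' with h | ⟨h1, h2⟩ | ⟨h1, h2⟩
        · exact h
        · exfalso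
          apply S.lemmaX hpq'
          have e1 := (corner_reach_proj h1).2
          have e2 := (corner_reach_proj h2).2
          exact (e1.symm.trans hRd).trans e2
        · exfalso
          apply S.lemmaX hpq'
          have e1 := (corner_reach_proj h1).2
          have e2 := (corner_reach_proj h2).2
          exact (e2.symm.trans hRd.symm).trans e1
      · push_neg at hnb
        have hduc := hDUC hnb
        set S : Surg n m ω := ⟨p0, d0, hd0, hp0, hq0, hω0'⟩ with hSdef
        have hbr := hnb S
        have hABr := S.bridge_AB hbr
        have hRd' : (dualGraph n m S.ω').Reachable w₁ w₂ := hRd.mono dual_le_close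
        have hw1 : inDual n m w₁ := (isCorner_iff.mp hc1).2.1
        have hw2 : inDual n m w₂ := (isCorner_iff.mp hc2).2.1
        rcases S.primal_reach_cases hRp with h | ⟨h1, h2⟩ | ⟨h1, h2⟩
        · have hR' := (ih S.ω' (hcard S)).1 u₁ w₁ u₂ w₂ hc1 hc2 h hRd'
          rcases S.lemmaW hR' with h3 | ⟨h3, h4⟩ | ⟨h3, h4⟩
          · exact h3
          · exact (h3.trans hABr).trans h4.symm
          · exact (h3.trans hABr.symm).trans h4.symm
        · have hd1 := hduc w₁ S.a hw1 S.inDual_a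
          have hd2 := hduc w₂ S.b hw2 S.inDual_b
          have hR1' := (ih S.ω' (hcard S)).1 u₁ w₁ S.p S.a hc1 S.cornerA h1
            (hd1.mono dual_le_close)
          have hR2' := (ih S.ω' (hcard S)).1 u₂ w₂ S.q S.b hc2 S.cornerB' h2.symm
            (hd2.mono dual_le_close)
          have e1 : (cornerGraph n m ω).Reachable (u₁, w₁) S.A := by
            rcases S.lemmaW hR1' with h3 | ⟨h3, h4⟩ | ⟨h3, h4⟩
            · exact h3
            · exact h3
            · exact h3.trans hABr.symm
          have e2 : (cornerGraph n m ω).Reachable (u₂, w₂) S.B' := by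
            rcases S.lemmaW hR2' with h3 | ⟨h3, h4⟩ | ⟨h3, h4⟩
            · exact h3
            · exact (h3.trans hABr).trans S.adj_BB'.reachable
            · exact h3.trans S.adj_BB'.reachable
          exact (e1.trans (S.adj_AA'.reachable.trans (S.bridge_reach hbr))).trans e2.symm
        · have hd1 := hduc w₁ S.a hw1 S.inDual_a
          have hd2 := hduc w₂ S.b hw2 S.inDual_b
          have hR1' := (ih S.ω' (hcard S)).1 u₁ w₁ S.q S.a hc1 S.cornerA' h1
            (hd1.mono dual_le_close)
          have hR2' := (ih S.ω' (hcard S)).1 u₂ w₂ S.p S.b hc2 S.cornerB h2.symm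
            (hd2.mono dual_le_close)
          have e1 : (cornerGraph n m ω).Reachable (u₁, w₁) S.A' := by
            rcases S.lemmaW hR1' with h3 | ⟨h3, h4⟩ | ⟨h3, h4⟩
            · exact h3
            · exact h3.trans S.adj_AA'.reachable
            · exact h3.trans (hABr.symm.trans S.adj_AA'.reachable)
          have e2 : (cornerGraph n m ω).Reachable (u₂, w₂) S.B := by
            rcases S.lemmaW hR2' with h3 | ⟨h3, h4⟩ | ⟨h3, h4⟩
            · exact h3
            · exact h3.trans hABr
            · exact h3
          exact (e1.trans (S.adj_AA'.reachable.symm.trans hABr)).trans e2.symm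

end CornerAux

/-- Two corners `ζ₁ = (u₁, w₁)` and `ζ₂ = (u₂, w₂)` are connected in the corner graph if
and only if `u₁` and `u₂` are connected in the open primal graph and `w₁` and `w₂` are
connected in the open dual graph. -/
theorem corner_connected_iff_primal_and_dual_connected
    (n m : ℕ) (hn : 1 ≤ n) (hm : 1 ≤ m) (ω : Sym2 (ℤ × ℤ) → Bool)
    (u₁ w₁ u₂ w₂ : ℤ × ℤ)
    (h₁ : isCorner n m (u₁, w₁)) (h₂ : isCorner n m (u₂, w₂)) :
    (cornerGraph n m ω).Reachable (u₁, w₁) (u₂, w₂) ↔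
      (primalGraph n m ω).Reachable u₁ u₂ ∧ (dualGraph n m ω).Reachable w₁ w₂ := by
  constructor
  · intro h
    exact CornerAux.corner_reach_proj h
  · rintro ⟨h1, h2⟩
    exact (CornerAux.master (n := n) (m := m) (CornerAux.openEdges n m ω).card ω le_rfl).1
      u₁ w₁ u₂ w₂ h₁ h₂ h1 h2
end

section
/- Every corner has degree exactly 2 in the corner graph. (Consequently, with free boundary conditions every FK configuration's corner graph is a disjoint union of cycles, i.e. the loop representation consists of loops only.) -/
open SimpleGraph

/-! ### Auxiliary machinery for the degree-two theorem -/

/-- The horizontal primal edge candidate at the corner `((a,b),(a-s,b-t))`. -/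
def eX (a b s : ℤ) : Sym2 (ℤ × ℤ) := s(((a : ℤ), b), (a + 1 - 2*s, b))

/-- The vertical primal edge candidate at the corner `((a,b),(a-s,b-t))`. -/
def eY (a b t : ℤ) : Sym2 (ℤ × ℤ) := s(((a : ℤ), b), (a, b + 1 - 2*t))

/-- The horizontal primal candidate edge is open and in the box. -/
def condX (n m : ℕ) (ω : Sym2 (ℤ × ℤ) → Bool) (a b s : ℤ) : Prop :=
  edgeInBox n m (eX a b s) ∧ ω (eX a b s) = true

/-- The vertical primal candidate edge is open and in the box. -/
def condY (n m : ℕ) (ω : Sym2 (ℤ × ℤ) → Bool) (a b t : ℤ) : Prop :=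
  edgeInBox n m (eY a b t) ∧ ω (eY a b t) = true

lemma edgeInBox_mk (n m : ℕ) (x y : ℤ × ℤ) :
    edgeInBox n m s(x, y) ↔ inPrimal n m x ∧ inPrimal n m y := by
  unfold edgeInBox
  constructor
  · intro h; exact ⟨h x (Sym2.mem_mk_left x y), h y (Sym2.mem_mk_right x y)⟩
  · rintro ⟨hx, hy⟩ v hv
    rcases Sym2.mem_iff.mp hv with rfl | rfl <;> assumption

lemma crossY (a b s t : ℤ) (hs : s = 0 ∨ s = 1) (ht : t = 0 ∨ t = 1) :
    crossEdge (a - s, b - t) (a - s, b - 1 + t) = eX a b s := by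
  have hmax : max (b - t) (b - 1 + t) = b := by first | omega | (dsimp only; omega)
  unfold crossEdge eX
  rw [if_pos rfl]
  simp only [hmax]
  rcases hs with rfl | rfl
  · ring_nf
  · ring_nf; exact Sym2.eq_swap

lemma crossX (a b s t : ℤ) (hs : s = 0 ∨ s = 1) (ht : t = 0 ∨ t = 1) :
    crossEdge (a - s, b - t) (a - 1 + s, b - t) = eY a b t := by
  have hne : (a - s : ℤ) ≠ a - 1 + s := by first | omega | (dsimp only; omega)
  have hmax : max (a - s) (a - 1 + s) = a := by first | omega | (dsimp only; omega)
  unfold crossEdge eY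
  rw [if_neg hne]
  simp only [hmax]
  rcases ht with rfl | rfl
  · ring_nf
  · ring_nf; exact Sym2.eq_swap

lemma corner_adj_iff (n m : ℕ) (ω : Sym2 (ℤ × ℤ) → Bool) (a b s t : ℤ)
    (hs : s = 0 ∨ s = 1) (ht : t = 0 ∨ t = 1)
    (ha0 : 0 ≤ a) (ha1 : a ≤ (n : ℤ)) (hb0 : 0 ≤ b) (hb1 : b ≤ (m : ℤ))
    (ζ' : (ℤ × ℤ) × (ℤ × ℤ)) :
    (cornerGraph n m ω).Adj ((a, b), (a - s, b - t)) ζ' ↔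
      (ζ' = ((a + 1 - 2*s, b), (a - s, b - t)) ∧ condX n m ω a b s) ∨
      (ζ' = ((a, b), (a - s, b - 1 + t)) ∧ ¬ condX n m ω a b s) ∨
      (ζ' = ((a, b + 1 - 2*t), (a - s, b - t)) ∧ condY n m ω a b t) ∨
      (ζ' = ((a, b), (a - 1 + s, b - t)) ∧ ¬ condY n m ω a b t) := by
  have hPrimal : inPrimal n m (a, b) := ⟨ha0, ha1, hb0, hb1⟩
  have hDual : inDual n m (a - s, b - t) := by
    refine ⟨by first | omega | (dsimp only; omega), by first | omega | (dsimp only; omega), by first | omega | (dsimp only; omega), by first | omega | (dsimp only; omega)⟩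
  have hCorner : isCorner n m ((a, b), (a - s, b - t)) :=
    ⟨hPrimal, hDual, by first | omega | (dsimp only; omega), by first | omega | (dsimp only; omega)⟩
  constructor
  · rintro ⟨hne, -, hc', hor⟩
    rcases hor with ⟨hw, hadj⟩ | ⟨hu, hadj⟩
    · -- primal move
      obtain ⟨hne1, hp1, hp2, hstep, hω⟩ := hadj
      obtain ⟨-, -, hA, hB⟩ := hc'
      have hw' : ζ'.2 = (a - s, b - t) := hw.symm
      rw [hw'] at hA hB
      have hA' : (a - s : ℤ) = ζ'.1.1 ∨ (a - s : ℤ) = ζ'.1.1 - 1 := hA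
      have hB' : (b - t : ℤ) = ζ'.1.2 ∨ (b - t : ℤ) = ζ'.1.2 - 1 := hB
      have hstep' : ((a : ℤ) = ζ'.1.1 ∧ |b - ζ'.1.2| = 1) ∨
          ((b : ℤ) = ζ'.1.2 ∧ |a - ζ'.1.1| = 1) := hstep
      have hcases : (ζ'.1.1 = a + 1 - 2*s ∧ ζ'.1.2 = b) ∨
          (ζ'.1.1 = a ∧ ζ'.1.2 = b + 1 - 2*t) := by
        rcases hstep' with ⟨h1, h2⟩ | ⟨h1, h2⟩ <;>
          rw [abs_eq (by norm_num : (0:ℤ) ≤ 1)] at h2 <;> omega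
      have hζ'eq : ζ' = (ζ'.1, ζ'.2) := rfl
      rcases hcases with ⟨h1, h2⟩ | ⟨h1, h2⟩
      · refine Or.inl ⟨?_, ?_, ?_⟩
        · exact Prod.ext (Prod.ext h1 h2) hw'
        · unfold eX
          rw [edgeInBox_mk]
          refine ⟨hPrimal, ?_⟩
          have : ζ'.1 = (a + 1 - 2*s, b) := Prod.ext h1 h2
          rwa [this] at hp2
        · have : ζ'.1 = (a + 1 - 2*s, b) := Prod.ext h1 h2
          rw [this] at hω
          exact hω
      · refine Or.inr (Or.inr (Or.inl ⟨?_, ?_, ?_⟩))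
        · exact Prod.ext (Prod.ext h1 h2) hw'
        · unfold eY
          rw [edgeInBox_mk]
          refine ⟨hPrimal, ?_⟩
          have : ζ'.1 = (a, b + 1 - 2*t) := Prod.ext h1 h2
          rwa [this] at hp2
        · have : ζ'.1 = (a, b + 1 - 2*t) := Prod.ext h1 h2
          rw [this] at hω
          exact hω
    · -- dual move
      obtain ⟨hne2, hd1, hd2, hstep, hint⟩ := hadj
      obtain ⟨-, -, hA, hB⟩ := hc'
      rw [← hu] at hA hB
      have hA' : ζ'.2.1 = a ∨ ζ'.2.1 = a - 1 := hA
      have hB' : ζ'.2.2 = b ∨ ζ'.2.2 = b - 1 := hB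
      have hstep' : ((a - s : ℤ) = ζ'.2.1 ∧ |b - t - ζ'.2.2| = 1) ∨
          ((b - t : ℤ) = ζ'.2.2 ∧ |a - s - ζ'.2.1| = 1) := hstep
      have hcases : (ζ'.2.1 = a - s ∧ ζ'.2.2 = b - 1 + t) ∨
          (ζ'.2.1 = a - 1 + s ∧ ζ'.2.2 = b - t) := by
        rcases hstep' with ⟨h1, h2⟩ | ⟨h1, h2⟩ <;>
          rw [abs_eq (by norm_num : (0:ℤ) ≤ 1)] at h2 <;> omega
      have hζ'eq : ζ' = (ζ'.1, ζ'.2) := rfl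
      have h2eq : ∀ x y : ℤ, ζ'.2.1 = x → ζ'.2.2 = y → ζ'.2 = (x, y) :=
        fun x y h1 h2 => Prod.ext h1 h2
      rcases hcases with ⟨h1, h2⟩ | ⟨h1, h2⟩
      · have hz2 : ζ'.2 = (a - s, b - 1 + t) := h2eq _ _ h1 h2
        refine Or.inr (Or.inl ⟨?_, ?_⟩)
        · exact Prod.ext hu.symm hz2
        · rintro ⟨hbox, hωx⟩
          rw [hz2] at hint
          unfold isInterior at hint
          rw [crossY a b s t hs ht] at hint
          have := hint hbox
          rw [this] at hωx
          exact Bool.false_ne_true hωx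
      · have hz2 : ζ'.2 = (a - 1 + s, b - t) := h2eq _ _ h1 h2
        refine Or.inr (Or.inr (Or.inr ⟨?_, ?_⟩))
        · exact Prod.ext hu.symm hz2
        · rintro ⟨hbox, hωy⟩
          rw [hz2] at hint
          unfold isInterior at hint
          rw [crossX a b s t hs ht] at hint
          have := hint hbox
          rw [this] at hωy
          exact Bool.false_ne_true hωy
  · rintro (⟨rfl, hbox, hω⟩ | ⟨rfl, hcond⟩ | ⟨rfl, hbox, hω⟩ | ⟨rfl, hcond⟩)
    · -- neighbor A, via the open horizontal edge
      have hp2 : inPrimal n m (a + 1 - 2*s, b) := ((edgeInBox_mk n m _ _).mp hbox).2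
      refine ⟨?_, hCorner, ⟨hp2, hDual, by first | omega | (dsimp only; omega), by first | omega | (dsimp only; omega)⟩, Or.inl ⟨rfl, ?_⟩⟩
      · intro h
        have := congrArg (fun p => p.1.1) h
        dsimp only at this
        omega
      · refine ⟨?_, hPrimal, hp2, Or.inr ⟨rfl, ?_⟩, hω⟩
        · intro h
          have := congrArg (fun p => p.1) h
          dsimp only at this
          omega
        · rw [abs_eq (by norm_num : (0:ℤ) ≤ 1)]; first | omega | (dsimp only; omega)
    · -- neighbor B, via the dual edge crossing the horizontal edge
      have hD2 : inDual n m (a - s, b - 1 + t) := ⟨by first | omega | (dsimp only; omega), by first | omega | (dsimp only; omega), by first | omega | (dsimp only; omega), by first | omega | (dsimp only; omega)⟩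
      refine ⟨?_, hCorner, ⟨hPrimal, hD2, by first | omega | (dsimp only; omega), by first | omega | (dsimp only; omega)⟩, Or.inr ⟨rfl, ?_⟩⟩
      · intro h
        have := congrArg (fun p => p.2.2) h
        dsimp only at this
        omega
      · refine ⟨?_, hDual, hD2, Or.inl ⟨rfl, ?_⟩, ?_⟩
        · intro h
          have := congrArg (fun p => p.2) h
          dsimp only at this
          omega
        · rw [abs_eq (by norm_num : (0:ℤ) ≤ 1)]; first | omega | (dsimp only; omega)
        · intro hint
          unfold isInterior at hint
          rw [crossY a b s t hs ht] at hint ⊢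
          have : ω (eX a b s) ≠ true := fun h => hcond ⟨hint, h⟩
          exact Bool.eq_false_iff.mpr this
    · -- neighbor C, via the open vertical edge
      have hp2 : inPrimal n m (a, b + 1 - 2*t) := ((edgeInBox_mk n m _ _).mp hbox).2
      refine ⟨?_, hCorner, ⟨hp2, hDual, by first | omega | (dsimp only; omega), by first | omega | (dsimp only; omega)⟩, Or.inl ⟨rfl, ?_⟩⟩
      · intro h
        have := congrArg (fun p => p.1.2) h
        dsimp only at this
        omega
      · refine ⟨?_, hPrimal, hp2, Or.inl ⟨rfl, ?_⟩, hω⟩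
        · intro h
          have := congrArg (fun p => p.2) h
          dsimp only at this
          omega
        · rw [abs_eq (by norm_num : (0:ℤ) ≤ 1)]; first | omega | (dsimp only; omega)
    · -- neighbor D, via the dual edge crossing the vertical edge
      have hD2 : inDual n m (a - 1 + s, b - t) := ⟨by first | omega | (dsimp only; omega), by first | omega | (dsimp only; omega), by first | omega | (dsimp only; omega), by first | omega | (dsimp only; omega)⟩
      refine ⟨?_, hCorner, ⟨hPrimal, hD2, by first | omega | (dsimp only; omega), by first | omega | (dsimp only; omega)⟩, Or.inr ⟨rfl, ?_⟩⟩
      · intro h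
        have := congrArg (fun p => p.2.1) h
        dsimp only at this
        omega
      · refine ⟨?_, hDual, hD2, Or.inr ⟨rfl, ?_⟩, ?_⟩
        · intro h
          have := congrArg (fun p => p.1) h
          dsimp only at this
          omega
        · rw [abs_eq (by norm_num : (0:ℤ) ≤ 1)]; first | omega | (dsimp only; omega)
        · intro hint
          unfold isInterior at hint
          rw [crossX a b s t hs ht] at hint ⊢
          have : ω (eY a b t) ≠ true := fun h => hcond ⟨hint, h⟩
          exact Bool.eq_false_iff.mpr this

/-- Every corner has degree exactly 2 in the corner graph (so that, with free boundary
conditions, the corner graph of every FK configuration is a disjoint union of cycles: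
the loop representation consists of loops only). -/
theorem corner_degree_two (n m : ℕ) (hn : 1 ≤ n) (hm : 1 ≤ m)
    (ω : Sym2 (ℤ × ℤ) → Bool) (ζ : (ℤ × ℤ) × (ℤ × ℤ)) (hζ : isCorner n m ζ) :
    ((cornerGraph n m ω).neighborSet ζ).ncard = 2 := by
  obtain ⟨⟨a, b⟩, ⟨c, d⟩⟩ := ζ
  obtain ⟨hp, hd, hx, hy⟩ := hζ
  have ha0 : (0:ℤ) ≤ a := hp.1
  have ha1 : a ≤ (n:ℤ) := hp.2.1
  have hb0 : (0:ℤ) ≤ b := hp.2.2.1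
  have hb1 : b ≤ (m:ℤ) := hp.2.2.2
  have hx' : c = a ∨ c = a - 1 := hx
  have hy' : d = b ∨ d = b - 1 := hy
  have hs : a - c = 0 ∨ a - c = 1 := by first | omega | (dsimp only; omega)
  have ht : b - d = 0 ∨ b - d = 1 := by first | omega | (dsimp only; omega)
  have hrw : ((a, b), (c, d)) = ((a, b), (a - (a - c), b - (b - d))) := by
    norm_num
  rw [hrw]
  by_cases hX : condX n m ω a b (a - c) <;> by_cases hY : condY n m ω a b (b - d)
  · have hset : (cornerGraph n m ω).neighborSet ((a, b), (a - (a - c), b - (b - d))) =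
        {((a + 1 - 2*(a - c), b), (a - (a - c), b - (b - d))),
         ((a, b + 1 - 2*(b - d)), (a - (a - c), b - (b - d)))} := by
      ext ζ'
      rw [mem_neighborSet, corner_adj_iff n m ω a b (a - c) (b - d) hs ht ha0 ha1 hb0 hb1]
      simp [hX, hY]
    rw [hset]
    refine Set.ncard_pair ?_
    intro h
    have := congrArg (fun p => p.1.1) h
    dsimp only at this
    omega
  · have hset : (cornerGraph n m ω).neighborSet ((a, b), (a - (a - c), b - (b - d))) =
        {((a + 1 - 2*(a - c), b), (a - (a - c), b - (b - d))),
         ((a, b), (a - 1 + (a - c), b - (b - d)))} := by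
      ext ζ'
      rw [mem_neighborSet, corner_adj_iff n m ω a b (a - c) (b - d) hs ht ha0 ha1 hb0 hb1]
      simp [hX, hY]
    rw [hset]
    refine Set.ncard_pair ?_
    intro h
    have := congrArg (fun p => p.1.1) h
    dsimp only at this
    omega
  · have hset : (cornerGraph n m ω).neighborSet ((a, b), (a - (a - c), b - (b - d))) =
        {((a, b), (a - (a - c), b - 1 + (b - d))),
         ((a, b + 1 - 2*(b - d)), (a - (a - c), b - (b - d)))} := by
      ext ζ'
      rw [mem_neighborSet, corner_adj_iff n m ω a b (a - c) (b - d) hs ht ha0 ha1 hb0 hb1]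
      simp [hX, hY]
    rw [hset]
    refine Set.ncard_pair ?_
    intro h
    have := congrArg (fun p => p.1.2) h
    dsimp only at this
    omega
  · have hset : (cornerGraph n m ω).neighborSet ((a, b), (a - (a - c), b - (b - d))) =
        {((a, b), (a - (a - c), b - 1 + (b - d))),
         ((a, b), (a - 1 + (a - c), b - (b - d)))} := by
      ext ζ'
      rw [mem_neighborSet, corner_adj_iff n m ω a b (a - c) (b - d) hs ht ha0 ha1 hb0 hb1]
      simp [hX, hY]
    rw [hset]
    refine Set.ncard_pair ?_
    intro h
    have := congrArg (fun p => p.2.1) h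
    dsimp only at this
    omega
end

section
/- Segment-product identity for windings along a loop: let m ≥ 1 and let φ : {1, …, 2m−1} → ℂ satisfy φ(u)² = 1 for every u. Let P be a partition of {1, …, 2m} into m pairs, each pair written (i, τ) with i < τ. Then ∏_{(i,τ) ∈ P} ∏_{u=i}^{τ−1} φ(u) = ∏_{j=1}^{m} φ(2j−1). (Here φ(u) represents the winding phase of the loop segment between the u-th and (u+1)-st insertion points visited along the loop; the winding phase of the arc from the i-th to the τ-th visited point is the product ∏_{u=i}^{τ−1} φ(u) by the composition property.) -/
open Finset

/-- Segment-product identity for windings along a loop: if `φ(u)² = 1` for all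
`u ∈ {1, …, 2m − 1}` and `P` is a partition of `{1, …, 2m}` into `m` pairs `(i, τ)` with
`i < τ`, then `∏_{(i,τ) ∈ P} ∏_{u=i}^{τ−1} φ(u) = ∏_{j=1}^{m} φ(2j − 1)`. -/
theorem matching_segment_product (m : ℕ) (hm : 1 ≤ m) (φ : ℕ → ℂ)
    (hφ : ∀ u ∈ Finset.Icc 1 (2 * m - 1), φ u ^ 2 = 1)
    (P : Finset (ℕ × ℕ))
    (hlt : ∀ p ∈ P, p.1 < p.2)
    (hrange : ∀ p ∈ P, p.1 ∈ Finset.Icc 1 (2 * m) ∧ p.2 ∈ Finset.Icc 1 (2 * m))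
    (hcover : ∀ x ∈ Finset.Icc 1 (2 * m), ∃! p, p ∈ P ∧ (p.1 = x ∨ p.2 = x)) :
    ∏ p ∈ P, ∏ u ∈ Finset.Ico p.1 p.2, φ u =
      ∏ j ∈ Finset.Icc 1 m, φ (2 * j - 1) := by
  classical
  -- counting lemma
  have hA : ∀ u ∈ Icc 1 (2*m-1),
      u = (P.filter (fun p => p.1 ≤ u ∧ u < p.2)).card
          + 2 * (P.filter (fun p => p.2 ≤ u)).card := by
    intro u hu
    simp only [mem_Icc] at hu
    set f : ℕ → ℕ × ℕ := fun x =>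
      if h : x ∈ Icc 1 (2*m) then (hcover x h).choose else (0,0) with hf
    have hfmem : ∀ x (h : x ∈ Icc 1 (2*m)), f x ∈ P ∧ ((f x).1 = x ∨ (f x).2 = x) := by
      intro x h
      simp only [hf, dif_pos h]
      exact (hcover x h).choose_spec.1
    have hfuniq : ∀ x (h : x ∈ Icc 1 (2*m)) p, p ∈ P → (p.1 = x ∨ p.2 = x) → p = f x := by
      intro x h p hp hpx
      simp only [hf, dif_pos h]
      exact (hcover x h).choose_spec.2 p ⟨hp, hpx⟩
    have hsub : Icc 1 u ⊆ Icc 1 (2*m) := by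
      intro x hx; simp only [mem_Icc] at *; omega
    have h1 : (Icc 1 u).card = ∑ p ∈ P, ((Icc 1 u).filter (fun x => f x = p)).card :=
      Finset.card_eq_sum_card_fiberwise (fun x hx => (hfmem x (hsub hx)).1)
    have h2 : ∀ p ∈ P, ((Icc 1 u).filter (fun x => f x = p)).card
        = (if p.1 ≤ u then 1 else 0) + (if p.2 ≤ u then 1 else 0) := by
      intro p hp
      have hp1 : 1 ≤ p.1 := (mem_Icc.mp (hrange p hp).1).1
      have hp2 : 1 ≤ p.2 := (mem_Icc.mp (hrange p hp).2).1
      have hne : p.1 ≠ p.2 := (hlt p hp).ne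
      have heq : (Icc 1 u).filter (fun x => f x = p)
          = ({p.1, p.2} : Finset ℕ).filter (· ≤ u) := by
        ext x
        simp only [mem_filter, mem_Icc, mem_insert, mem_singleton]
        constructor
        · rintro ⟨⟨hx1, hxu⟩, hfx⟩
          have := hfmem x (hsub (mem_Icc.mpr ⟨hx1, hxu⟩))
          rw [hfx] at this
          exact ⟨this.2.imp Eq.symm Eq.symm, hxu⟩
        · rintro ⟨hx, hxu⟩
          have hx1 : 1 ≤ x := by rcases hx with h | h <;> omega
          refine ⟨⟨hx1, hxu⟩, ?_⟩
          exact (hfuniq x (hsub (mem_Icc.mpr ⟨hx1, hxu⟩)) p hp (hx.imp Eq.symm Eq.symm)).symm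
      rw [heq]
      by_cases h1' : p.1 ≤ u <;> by_cases h2' : p.2 ≤ u <;>
        simp [Finset.filter_insert, Finset.filter_singleton, h1', h2', hne]
    have h3 : (Icc 1 u).card = u := by simp
    rw [h3, Finset.sum_congr rfl h2] at h1
    rw [Finset.sum_add_distrib] at h1
    have hc1 : ∑ p ∈ P, (if p.1 ≤ u then 1 else 0)
        = ∑ p ∈ P, ((if p.1 ≤ u ∧ u < p.2 then 1 else 0) + (if p.2 ≤ u then 1 else 0)) := by
      refine Finset.sum_congr rfl fun p hp => ?_
      have := hlt p hp
      split_ifs <;> omega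
    rw [hc1, Finset.sum_add_distrib] at h1
    rw [Finset.card_filter, Finset.card_filter]
    omega
  -- rewrite inner Ico as filter
  have hIco : ∀ p ∈ P, Finset.Ico p.1 p.2
      = (Icc 1 (2*m-1)).filter (fun u => p.1 ≤ u ∧ u < p.2) := by
    intro p hp
    have hp1 : 1 ≤ p.1 := (mem_Icc.mp (hrange p hp).1).1
    have hp2 : p.2 ≤ 2*m := (mem_Icc.mp (hrange p hp).2).2
    ext x
    simp only [mem_Ico, mem_filter, mem_Icc]
    omega
  rw [Finset.prod_congr rfl fun p hp => by rw [hIco p hp]]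
  rw [Finset.prod_comm' (s' := fun u => P.filter (fun p => p.1 ≤ u ∧ u < p.2))
      (t' := Icc 1 (2*m-1)) (by
        intro p u
        simp only [mem_filter]
        tauto)]
  have step : ∀ u ∈ Icc 1 (2*m-1),
      (∏ p ∈ P.filter (fun p => p.1 ≤ u ∧ u < p.2), φ u) = φ u ^ u := by
    intro u hu
    rw [Finset.prod_const]
    have h := hA u hu
    have hφu := hφ u hu
    set x := φ u with hx
    conv_rhs => rw [h]
    rw [pow_add, pow_mul, hφu, one_pow, mul_one]
  rw [Finset.prod_congr rfl step]
  -- now ∏ u ∈ Icc 1 (2m-1), φ u ^ u = ∏ j ∈ Icc 1 m, φ (2j-1)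
  have hpow : ∀ u ∈ Icc 1 (2*m-1), φ u ^ u = if Odd u then φ u else 1 := by
    intro u hu
    have hφu := hφ u hu
    set x := φ u with hx
    rcases Nat.even_or_odd u with he | ho
    · obtain ⟨k, hk⟩ := he
      rw [if_neg (by simp [Nat.odd_iff, Nat.even_iff.mp ⟨k, hk⟩])]
      have h2 : u = 2 * k := by omega
      rw [h2, pow_mul, hφu, one_pow]
    · obtain ⟨k, hk⟩ := ho
      rw [if_pos ⟨k, hk⟩, hk, pow_add, pow_mul, hφu, one_pow, one_mul, pow_one]
  rw [Finset.prod_congr rfl hpow, ← Finset.prod_filter]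
  refine Finset.prod_nbij' (fun u => (u+1)/2) (fun j => 2*j-1) ?_ ?_ ?_ ?_ ?_
  · intro u hu
    simp only [mem_filter, mem_Icc, Nat.odd_iff] at hu
    simp only [mem_Icc]
    omega
  · intro j hj
    simp only [mem_Icc] at hj
    simp only [mem_filter, mem_Icc, Nat.odd_iff]
    omega
  · intro u hu
    simp only [mem_filter, mem_Icc, Nat.odd_iff] at hu
    omega
  · intro j hj
    simp only [mem_Icc] at hj
    omega
  · intro u hu
    simp only [mem_filter, mem_Icc, Nat.odd_iff] at hu
    congr 1
    omega
end

section
/- The sign of the permutation associated to a perfect matching equals (−1) to the number of crossings: let P consist of pairs (i₁, τ₁), …, (i_m, τ_m) of {1, …, 2m} with i_j < τ_j for each j and i₁ < i₂ < … < i_m, forming a partition of {1, …, 2m}. Define the permutation μ of {1, …, 2m} by μ(2k−1) = i_k and μ(2k) = τ_k. Then sign(μ) = (−1)^{cr(P)}, where cr(P) = #{ (j, k) : j < k and i_j < i_k < τ_j < τ_k } is the number of crossing pairs of P. -/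
open Finset


lemma sign_eq_signAux' {n : ℕ} (f : Equiv.Perm (Fin n)) :
    Equiv.Perm.sign f = Equiv.Perm.signAux f := by
  refine Equiv.Perm.swap_induction_on f ?_ ?_
  · simp [Equiv.Perm.signAux_one]
  · intro f x y hxy ih
    rw [Equiv.Perm.sign_mul, Equiv.Perm.signAux_mul, ih, Equiv.Perm.sign_swap hxy,
      Equiv.Perm.signAux_swap hxy]

/-- half-index -/
def Khalf (m : ℕ) (p : Fin (2 * m)) : Fin m := ⟨p.val / 2, by have := p.isLt; omega⟩

/-- even position -/
def Epos (m : ℕ) (k : Fin m) : Fin (2 * m) := ⟨2 * k.val, by have := k.isLt; omega⟩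

/-- odd position -/
def Opos (m : ℕ) (k : Fin m) : Fin (2 * m) := ⟨2 * k.val + 1, by have := k.isLt; omega⟩

/-- The sign of the permutation associated to a perfect matching equals `(−1)` to the
number of crossings. The matching of `{1, …, 2m}` is given by pairs `(a k, b k)`,
`k = 1, …, m` (0-indexed by `Fin m`), with `a k < b k`, `a` strictly increasing, and the
pairs partitioning `{1, …, 2m}`. The permutation `μ` of `{1, …, 2m}` (encoded on
`Fin (2m)`, position/value `j` standing for `j + 1`) satisfies `μ(2k−1) = i_k` and
`μ(2k) = τ_k`; then `sign μ = (−1)^{cr}` where `cr` is the number of crossing pairs. -/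
theorem matching_sign_eq_crossings (m : ℕ) (hm : 1 ≤ m) (a b : Fin m → ℕ)
    (hab : ∀ k, a k < b k)
    (ha : StrictMono a)
    (hrange : ∀ k, 1 ≤ a k ∧ b k ≤ 2 * m)
    (hcover : ∀ x, 1 ≤ x → x ≤ 2 * m → ∃! k, a k = x ∨ b k = x)
    (μ : Equiv.Perm (Fin (2 * m)))
    (hμ : ∀ (k : Fin m) (j : Fin (2 * m)),
      ((j : ℕ) = 2 * (k : ℕ) → ((μ j : ℕ) + 1 = a k)) ∧
      ((j : ℕ) = 2 * (k : ℕ) + 1 → ((μ j : ℕ) + 1 = b k))) :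
    Equiv.Perm.sign μ =
      (-1 : ℤˣ) ^ ((Finset.univ.filter (fun jk : Fin m × Fin m =>
        jk.1 < jk.2 ∧ a jk.1 < a jk.2 ∧ a jk.2 < b jk.1 ∧ b jk.1 < b jk.2)).card) := by
  classical
  -- value lemmas
  have hvA : ∀ p : Fin (2 * m), p.val % 2 = 0 → (μ p : ℕ) + 1 = a (Khalf m p) := by
    intro p hp
    exact (hμ (Khalf m p) p).1 (by show p.val = 2 * (p.val / 2); omega)
  have hvB : ∀ p : Fin (2 * m), p.val % 2 = 1 → (μ p : ℕ) + 1 = b (Khalf m p) := by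
    intro p hp
    exact (hμ (Khalf m p) p).2 (by show p.val = 2 * (p.val / 2) + 1; omega)
  -- distinctness
  have hbne : ∀ j k : Fin m, j ≠ k → b j ≠ b k := by
    intro j k hjk hbb
    have h1 : 1 ≤ b j := le_trans (hrange j).1 (le_of_lt (hab j))
    obtain ⟨u, _, hu⟩ := hcover (b j) h1 (hrange j).2
    exact hjk ((hu j (Or.inr rfl)).trans (hu k (Or.inr hbb.symm)).symm)
  have habne : ∀ j k : Fin m, a k ≠ b j := by
    intro j k hbb
    have h1 : 1 ≤ a k := (hrange k).1
    have h2 : a k ≤ 2 * m := le_trans (le_of_lt (hab k)) (hrange k).2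
    obtain ⟨u, _, hu⟩ := hcover (a k) h1 h2
    have : j = k := (hu j (Or.inr hbb.symm)).trans (hu k (Or.inl rfl)).symm
    subst this
    exact absurd hbb (ne_of_lt (hab _))
  -- the sets
  set C : Finset (Fin m × Fin m) := Finset.univ.filter (fun jk : Fin m × Fin m =>
    jk.1 < jk.2 ∧ a jk.1 < a jk.2 ∧ a jk.2 < b jk.1 ∧ b jk.1 < b jk.2) with hC
  set S : Finset (Fin m × Fin m) := Finset.univ.filter (fun jk : Fin m × Fin m =>
    jk.1 < jk.2 ∧ a jk.2 < b jk.1) with hS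
  set T : Finset (Fin m × Fin m) := Finset.univ.filter (fun jk : Fin m × Fin m =>
    jk.1 < jk.2 ∧ b jk.2 < b jk.1) with hT
  set I : Finset (Σ _ : Fin (2 * m), Fin (2 * m)) :=
    (Equiv.Perm.finPairsLT (2 * m)).filter (fun x => μ x.1 ≤ μ x.2) with hI
  -- step 1 : sign μ = (-1)^I.card
  have step1 : Equiv.Perm.sign μ = (-1 : ℤˣ) ^ I.card := by
    rw [sign_eq_signAux', Equiv.Perm.signAux, Finset.prod_ite, Finset.prod_const,
      Finset.prod_const, one_pow, mul_one]
  -- membership facts for I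
  have hImem : ∀ x : (Σ _ : Fin (2 * m), Fin (2 * m)), x ∈ I ↔
      x.2.val < x.1.val ∧ (μ x.1 : ℕ) < (μ x.2 : ℕ) := by
    intro x
    rw [hI, Finset.mem_filter, Equiv.Perm.mem_finPairsLT]
    constructor
    · rintro ⟨h1, h2⟩
      have hne : x.1 ≠ x.2 := fun he => absurd h1 (by rw [he]; exact lt_irrefl _)
      have hμne : (μ x.1 : ℕ) ≠ (μ x.2 : ℕ) := fun he => hne (μ.injective (Fin.ext he))
      exact ⟨h1, lt_of_le_of_ne h2 hμne⟩
    · rintro ⟨h1, h2⟩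
      exact ⟨h1, le_of_lt h2⟩
  -- split I by parity of x.1
  set I0 : Finset (Σ _ : Fin (2 * m), Fin (2 * m)) := I.filter (fun x => x.1.val % 2 = 0) with hI0
  set I1 : Finset (Σ _ : Fin (2 * m), Fin (2 * m)) := I.filter (fun x => ¬ x.1.val % 2 = 0) with hI1
  have hsplit : I.card = I0.card + I1.card := (Finset.card_filter_add_card_filter_not _).symm
  -- classification of inversions
  have key : ∀ x ∈ I, x.2.val % 2 = 1 ∧ x.2.val / 2 < x.1.val / 2 ∧
      (x.1.val % 2 = 0 → a (Khalf m x.1) < b (Khalf m x.2)) ∧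
      (x.1.val % 2 = 1 → b (Khalf m x.1) < b (Khalf m x.2)) := by
    intro x hx
    obtain ⟨hqp, hlt⟩ := (hImem x).1 hx
    have hq2 : x.2.val % 2 = 1 := by
      by_contra hq
      have hq0 : x.2.val % 2 = 0 := by omega
      have hv2 := hvA x.2 hq0
      -- x.2 even: μ x.2 + 1 = a (Khalf x.2); whatever x.1 is, its value ≥ a (Khalf x.1)
      have hK : (Khalf m x.2).val ≤ (Khalf m x.1).val := by
        show x.2.val / 2 ≤ x.1.val / 2; omega
      have haK : a (Khalf m x.2) ≤ a (Khalf m x.1) := ha.le_iff_le.2 hK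
      rcases Nat.even_or_odd x.1.val with hp | hp
      · have hp0 : x.1.val % 2 = 0 := Nat.even_iff.1 hp
        have hv1 := hvA x.1 hp0
        -- a (K x.1) < a (K x.2) from hlt, contradicting haK... unless equal
        omega
      · have hp1 : x.1.val % 2 = 1 := Nat.odd_iff.1 hp
        have hv1 := hvB x.1 hp1
        have : a (Khalf m x.1) < b (Khalf m x.1) := hab _
        omega
    have hv2 := hvB x.2 hq2
    have hKlt : x.2.val / 2 < x.1.val / 2 := by
      rcases Nat.even_or_odd x.1.val with hp | hp
      · have hp0 : x.1.val % 2 = 0 := Nat.even_iff.1 hp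
        omega
      · have hp1 : x.1.val % 2 = 1 := Nat.odd_iff.1 hp
        by_contra hK
        have he : x.2.val / 2 = x.1.val / 2 := by omega
        have : Khalf m x.2 = Khalf m x.1 := Fin.ext he
        have hv1 := hvB x.1 hp1
        rw [this] at hv2
        omega
    refine ⟨hq2, hKlt, ?_, ?_⟩
    · intro hp0
      have hv1 := hvA x.1 hp0
      omega
    · intro hp1
      have hv1 := hvB x.1 hp1
      omega
  -- I0.card = S.card
  have hSmem : ∀ jk : Fin m × Fin m, jk ∈ S ↔ jk.1 < jk.2 ∧ a jk.2 < b jk.1 := by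
    intro jk; rw [hS, Finset.mem_filter]; simp
  have hTmem : ∀ jk : Fin m × Fin m, jk ∈ T ↔ jk.1 < jk.2 ∧ b jk.2 < b jk.1 := by
    intro jk; rw [hT, Finset.mem_filter]; simp
  have hcard0 : I0.card = S.card := by
    refine Finset.card_bij' (fun x _ => (Khalf m x.2, Khalf m x.1))
      (fun jk _ => ⟨Epos m jk.2, Opos m jk.1⟩) ?_ ?_ ?_ ?_
    · intro x hx
      rw [hI0, Finset.mem_filter] at hx
      obtain ⟨hxI, hp0⟩ := hx
      obtain ⟨_, hKlt, hS0, _⟩ := key x hxI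
      rw [hSmem]
      exact ⟨hKlt, hS0 hp0⟩
    · intro jk hjk
      rw [hSmem] at hjk
      rw [hI0, Finset.mem_filter]
      dsimp only
      constructor
      · rw [hImem]
        constructor
        · show 2 * jk.1.val + 1 < 2 * jk.2.val
          have : jk.1.val < jk.2.val := hjk.1
          omega
        · have h1 : (μ (Epos m jk.2) : ℕ) + 1 = a jk.2 := by
            have := hvA (Epos m jk.2) (by show (2 * jk.2.val) % 2 = 0; omega)
            have hk : Khalf m (Epos m jk.2) = jk.2 := Fin.ext (by show 2 * jk.2.val / 2 = jk.2.val; omega)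
            rwa [hk] at this
          have h2 : (μ (Opos m jk.1) : ℕ) + 1 = b jk.1 := by
            have := hvB (Opos m jk.1) (by show (2 * jk.1.val + 1) % 2 = 1; omega)
            have hk : Khalf m (Opos m jk.1) = jk.1 := Fin.ext (by show (2 * jk.1.val + 1) / 2 = jk.1.val; omega)
            rwa [hk] at this
          have := hjk.2
          show (μ (Epos m jk.2) : ℕ) < (μ (Opos m jk.1) : ℕ)
          omega
      · show (2 * jk.2.val) % 2 = 0
        omega
    · intro x hx
      obtain ⟨p, q⟩ := x
      rw [hI0, Finset.mem_filter] at hx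
      obtain ⟨hxI, hp0⟩ := hx
      obtain ⟨hq2, -, -, -⟩ := key _ hxI
      dsimp only at hp0 hq2 ⊢
      refine Sigma.ext (Fin.ext ?_) (heq_of_eq (Fin.ext ?_))
      · show 2 * (p.val / 2) = p.val
        omega
      · show 2 * (q.val / 2) + 1 = q.val
        omega
    · intro jk hjk
      obtain ⟨j, k⟩ := jk
      refine Prod.ext ?_ ?_
      · exact Fin.ext (by show (2 * j.val + 1) / 2 = j.val; omega)
      · exact Fin.ext (by show (2 * k.val) / 2 = k.val; omega)
  -- I1.card = T.card
  have hcard1 : I1.card = T.card := by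
    refine Finset.card_bij' (fun x _ => (Khalf m x.2, Khalf m x.1))
      (fun jk _ => ⟨Opos m jk.2, Opos m jk.1⟩) ?_ ?_ ?_ ?_
    · intro x hx
      rw [hI1, Finset.mem_filter] at hx
      obtain ⟨hxI, hp1'⟩ := hx
      have hp1 : x.1.val % 2 = 1 := by omega
      obtain ⟨_, hKlt, _, hT1⟩ := key x hxI
      rw [hTmem]
      exact ⟨hKlt, hT1 hp1⟩
    · intro jk hjk
      rw [hTmem] at hjk
      rw [hI1, Finset.mem_filter]
      dsimp only
      constructor
      · rw [hImem]
        constructor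
        · show 2 * jk.1.val + 1 < 2 * jk.2.val + 1
          have : jk.1.val < jk.2.val := hjk.1
          omega
        · have h1 : (μ (Opos m jk.2) : ℕ) + 1 = b jk.2 := by
            have := hvB (Opos m jk.2) (by show (2 * jk.2.val + 1) % 2 = 1; omega)
            have hk : Khalf m (Opos m jk.2) = jk.2 := Fin.ext (by show (2 * jk.2.val + 1) / 2 = jk.2.val; omega)
            rwa [hk] at this
          have h2 : (μ (Opos m jk.1) : ℕ) + 1 = b jk.1 := by
            have := hvB (Opos m jk.1) (by show (2 * jk.1.val + 1) % 2 = 1; omega)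
            have hk : Khalf m (Opos m jk.1) = jk.1 := Fin.ext (by show (2 * jk.1.val + 1) / 2 = jk.1.val; omega)
            rwa [hk] at this
          have := hjk.2
          show (μ (Opos m jk.2) : ℕ) < (μ (Opos m jk.1) : ℕ)
          omega
      · show ¬ (2 * jk.2.val + 1) % 2 = 0
        omega
    · intro x hx
      obtain ⟨p, q⟩ := x
      rw [hI1, Finset.mem_filter] at hx
      obtain ⟨hxI, hp1'⟩ := hx
      obtain ⟨hq2, -, -, -⟩ := key _ hxI
      dsimp only at hp1' hq2 ⊢
      refine Sigma.ext (Fin.ext ?_) (heq_of_eq (Fin.ext ?_))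
      · show 2 * (p.val / 2) + 1 = p.val
        omega
      · show 2 * (q.val / 2) + 1 = q.val
        omega
    · intro jk hjk
      obtain ⟨j, k⟩ := jk
      refine Prod.ext ?_ ?_
      · exact Fin.ext (by show (2 * j.val + 1) / 2 = j.val; omega)
      · exact Fin.ext (by show (2 * k.val + 1) / 2 = k.val; omega)
  -- S = C ∪ T, disjoint
  have hTS : T ⊆ S := by
    intro jk hjk
    rw [hTmem] at hjk
    rw [hSmem]
    exact ⟨hjk.1, lt_trans (hab jk.2) hjk.2⟩
  have hCeq : C = S \ T := by
    ext jk
    rw [hC, Finset.mem_sdiff, hSmem, hTmem, Finset.mem_filter]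
    constructor
    · rintro ⟨_, h1, _, h3, h4⟩
      exact ⟨⟨h1, h3⟩, fun hh => absurd hh.2 (not_lt_of_gt h4)⟩
    · rintro ⟨⟨h1, h2⟩, h3⟩
      refine ⟨Finset.mem_univ _, h1, ha h1, h2, ?_⟩
      have hne : b jk.1 ≠ b jk.2 := hbne _ _ (ne_of_lt h1)
      have : ¬ b jk.2 < b jk.1 := fun hh => h3 ⟨h1, hh⟩
      omega
  have hScard : S.card = C.card + T.card := by
    rw [hCeq, Finset.card_sdiff_of_subset hTS]
    have := Finset.card_le_card hTS
    omega
  -- conclude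
  rw [step1, hsplit, hcard0, hcard1, hScard]
  rw [show C.card + T.card + T.card = C.card + 2 * T.card by ring]
  rw [pow_add, pow_mul]
  norm_num
end

section
/- Adding-winding for non-crossing matchings: let m ≥ 1 and let φ : {1, …, 2m−1} → ℂ satisfy φ(u)² = 1 for every u. Let P be a non-crossing partition of {1, …, 2m} into m pairs (i₁, τ₁), …, (i_m, τ_m) with i_j < τ_j and i₁ < … < i_m (non-crossing means there are no j < k with i_j < i_k < τ_j < τ_k), and let μ be the permutation with μ(2k−1) = i_k, μ(2k) = τ_k. Then sign(μ) · ∏_{j=1}^{m} ∏_{u=i_j}^{τ_j−1} φ(u) = ∏_{j=1}^{m} φ(2j−1). -/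
open Finset

private lemma mySignEq {n : ℕ} (f : Equiv.Perm (Fin n)) :
    (Equiv.Perm.sign f : ℤˣ) = Equiv.Perm.signAux f := by
  refine Equiv.Perm.swap_induction_on f ?_ ?_
  · simp [Equiv.Perm.signAux_one]
  · intro g x y hxy ih
    rw [map_mul, Equiv.Perm.signAux_mul, ih, Equiv.Perm.sign_swap hxy,
      Equiv.Perm.signAux_swap hxy]

private def pflip (m : ℕ) (j : Fin (2*m)) : Fin (2*m) :=
  ⟨2*((j:ℕ)/2) + (1 - (j:ℕ)%2), by have := j.isLt; omega⟩

private lemma pflip_val (m : ℕ) (j : Fin (2*m)) :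
    (pflip m j : ℕ) = 2*((j:ℕ)/2) + (1 - (j:ℕ)%2) := rfl

private lemma pflip_pflip (m : ℕ) (j : Fin (2*m)) : pflip m (pflip m j) = j := by
  apply Fin.ext
  rw [pflip_val, pflip_val]
  omega

private lemma signOne (m : ℕ) (a b : Fin m → ℕ) (hab : ∀ k, a k < b k) (ha : StrictMono a)
    (hnc : ¬ ∃ j k : Fin m, j < k ∧ a j < a k ∧ a k < b j ∧ b j < b k)
    (μ : Equiv.Perm (Fin (2 * m)))
    (hμ : ∀ (k : Fin m) (j : Fin (2 * m)),
      ((j : ℕ) = 2 * (k : ℕ) → ((μ j : ℕ) + 1 = a k)) ∧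
      ((j : ℕ) = 2 * (k : ℕ) + 1 → ((μ j : ℕ) + 1 = b k))) :
    Equiv.Perm.sign μ = 1 := by
  have key : ∀ p q : Fin (2*m), (p:ℕ) < (q:ℕ) → (μ q:ℕ) < (μ p:ℕ) →
      ((p:ℕ) < (pflip m q : ℕ) ∧ (μ (pflip m q) : ℕ) < (μ p : ℕ)) := by
    intro p q hpq hinv
    have hqm := q.isLt
    have hpm := p.isLt
    obtain ⟨kF, hkF⟩ : ∃ x : Fin m, (x:ℕ) = (q:ℕ)/2 := ⟨⟨(q:ℕ)/2, by omega⟩, rfl⟩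
    obtain ⟨jF, hjF⟩ : ∃ x : Fin m, (x:ℕ) = (p:ℕ)/2 := ⟨⟨(p:ℕ)/2, by omega⟩, rfl⟩
    have hkm := kF.isLt
    have hjm := jF.isLt
    obtain ⟨q0, hq0⟩ : ∃ x : Fin (2*m), (x:ℕ) = 2*(kF:ℕ) := ⟨⟨2*(kF:ℕ), by omega⟩, rfl⟩
    obtain ⟨q1, hq1⟩ : ∃ x : Fin (2*m), (x:ℕ) = 2*(kF:ℕ)+1 := ⟨⟨2*(kF:ℕ)+1, by omega⟩, rfl⟩
    obtain ⟨p0, hp0⟩ : ∃ x : Fin (2*m), (x:ℕ) = 2*(jF:ℕ) := ⟨⟨2*(jF:ℕ), by omega⟩, rfl⟩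
    obtain ⟨p1, hp1⟩ : ∃ x : Fin (2*m), (x:ℕ) = 2*(jF:ℕ)+1 := ⟨⟨2*(jF:ℕ)+1, by omega⟩, rfl⟩
    have vq0 : (μ q0 : ℕ) + 1 = a kF := (hμ kF q0).1 hq0
    have vq1 : (μ q1 : ℕ) + 1 = b kF := (hμ kF q1).2 hq1
    have vp0 : (μ p0 : ℕ) + 1 = a jF := (hμ jF p0).1 hp0
    have vp1 : (μ p1 : ℕ) + 1 = b jF := (hμ jF p1).2 hp1
    have habk := hab kF
    have habj := hab jF
    -- jF < kF
    have hjlk : (jF:ℕ) < (kF:ℕ) := by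
      by_contra hcon
      have hpe : p = q0 := Fin.ext (by omega)
      have hqe : q = q1 := Fin.ext (by omega)
      rw [hpe, hqe] at hinv
      omega
    have hjFkF : jF < kF := Fin.lt_def.2 hjlk
    have haa : a jF < a kF := ha hjFkF
    -- p must be odd
    have hpe : p = p1 := by
      rcases (by omega : (p:ℕ) = 2*(jF:ℕ) ∨ (p:ℕ) = 2*(jF:ℕ)+1) with h | h
      · exfalso
        have hpe0 : p = p0 := Fin.ext (by omega)
        rw [hpe0] at hinv
        rcases (by omega : (q:ℕ) = 2*(kF:ℕ) ∨ (q:ℕ) = 2*(kF:ℕ)+1) with h' | h'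
        · rw [show q = q0 from Fin.ext (by omega)] at hinv; omega
        · rw [show q = q1 from Fin.ext (by omega)] at hinv; omega
      · exact Fin.ext (by omega)
    rw [hpe] at hinv ⊢
    have hbne : b kF ≠ b jF := by
      intro h
      have h2 : q1 = p1 := μ.injective (Fin.ext (by omega))
      have h3 := congrArg Fin.val h2
      omega
    rcases (by omega : (q:ℕ) = 2*(kF:ℕ) ∨ (q:ℕ) = 2*(kF:ℕ)+1) with h' | h'
    · have hqe : q = q0 := Fin.ext (by omega)
      rw [hqe] at hinv
      have h1 : a kF < b jF := by omega
      have hbb : b kF < b jF := by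
        rcases Nat.lt_or_ge (b kF) (b jF) with h | h
        · exact h
        · exact absurd ⟨jF, kF, hjFkF, haa, h1, by omega⟩ hnc
      have hfe : pflip m q0 = q1 := Fin.ext (by rw [pflip_val]; omega)
      rw [hqe, hfe]
      exact ⟨by omega, by omega⟩
    · have hqe : q = q1 := Fin.ext (by omega)
      rw [hqe] at hinv
      have hfe : pflip m q1 = q0 := Fin.ext (by rw [pflip_val]; omega)
      rw [hqe, hfe]
      exact ⟨by omega, by omega⟩
  -- kill the sign with an involution
  rw [mySignEq]
  unfold Equiv.Perm.signAux
  refine Finset.prod_involution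
    (fun x _ => if μ x.1 ≤ μ x.2 then ⟨pflip m x.1, x.2⟩ else x) ?_ ?_ ?_ ?_
  · intro x hx
    by_cases hc : μ x.1 ≤ μ x.2
    · have hlt : x.2 < x.1 := Equiv.Perm.mem_finPairsLT.1 hx
      have hne : μ x.1 ≠ μ x.2 := fun h => (ne_of_gt hlt) (μ.injective h)
      have hstrict : (μ x.1 : ℕ) < (μ x.2 : ℕ) := Fin.lt_def.1 (lt_of_le_of_ne hc hne)
      obtain ⟨h1, h2⟩ := key x.2 x.1 (Fin.lt_def.1 hlt) hstrict
      have hc2 : μ (pflip m x.1) ≤ μ x.2 := Fin.le_def.2 (le_of_lt h2)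
      simp only [if_pos hc, if_pos hc2]
      decide
    · simp only [if_neg hc]
      decide
  · intro x hx hfne
    have hc : μ x.1 ≤ μ x.2 := by
      by_contra hc; exact hfne (if_neg hc)
    simp only [if_pos hc]
    intro h
    have h2 := congrArg (fun y => (y.1 : ℕ)) h
    simp only [pflip_val] at h2
    have := x.1.isLt
    omega
  · intro x hx
    by_cases hc : μ x.1 ≤ μ x.2
    · have hlt : x.2 < x.1 := Equiv.Perm.mem_finPairsLT.1 hx
      have hne : μ x.1 ≠ μ x.2 := fun h => (ne_of_gt hlt) (μ.injective h)
      have hstrict : (μ x.1 : ℕ) < (μ x.2 : ℕ) := Fin.lt_def.1 (lt_of_le_of_ne hc hne)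
      obtain ⟨h1, h2⟩ := key x.2 x.1 (Fin.lt_def.1 hlt) hstrict
      simp only [if_pos hc]
      exact Equiv.Perm.mem_finPairsLT.2 (Fin.lt_def.2 h1)
    · simpa only [if_neg hc] using hx
  · intro x hx
    by_cases hc : μ x.1 ≤ μ x.2
    · have hlt : x.2 < x.1 := Equiv.Perm.mem_finPairsLT.1 hx
      have hne : μ x.1 ≠ μ x.2 := fun h => (ne_of_gt hlt) (μ.injective h)
      have hstrict : (μ x.1 : ℕ) < (μ x.2 : ℕ) := Fin.lt_def.1 (lt_of_le_of_ne hc hne)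
      obtain ⟨h1, h2⟩ := key x.2 x.1 (Fin.lt_def.1 hlt) hstrict
      have hc2 : μ (pflip m x.1) ≤ μ x.2 := Fin.le_def.2 (le_of_lt h2)
      simp only [if_pos hc, if_pos hc2, pflip_pflip]
    · simp only [if_neg hc, if_neg hc]

private lemma sumRangeDouble (f : ℕ → ℕ) (n : ℕ) :
    ∑ j ∈ Finset.range (2 * n), f j = ∑ k ∈ Finset.range n, (f (2 * k) + f (2 * k + 1)) := by
  induction n with
  | zero => simp
  | succ n ih =>
    rw [show 2 * (n + 1) = 2 * n + 1 + 1 by ring, Finset.sum_range_succ,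
      Finset.sum_range_succ, ih, Finset.sum_range_succ, add_assoc]

private lemma prodRangeDouble {M : Type*} [CommMonoid M] (f : ℕ → M) (n : ℕ) :
    ∏ j ∈ Finset.range (2 * n), f j = ∏ k ∈ Finset.range n, (f (2 * k) * f (2 * k + 1)) := by
  induction n with
  | zero => simp
  | succ n ih =>
    rw [show 2 * (n + 1) = 2 * n + 1 + 1 by ring, Finset.prod_range_succ,
      Finset.prod_range_succ, ih, Finset.prod_range_succ, mul_assoc]

private lemma prodPart (m : ℕ) (hm : 1 ≤ m) (φ : ℕ → ℂ)
    (hφ : ∀ u ∈ Finset.Icc 1 (2 * m - 1), φ u ^ 2 = 1)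
    (a b : Fin m → ℕ)
    (hab : ∀ k, a k < b k)
    (hrange : ∀ k, 1 ≤ a k ∧ b k ≤ 2 * m)
    (μ : Equiv.Perm (Fin (2 * m)))
    (hμ : ∀ (k : Fin m) (j : Fin (2 * m)),
      ((j : ℕ) = 2 * (k : ℕ) → ((μ j : ℕ) + 1 = a k)) ∧
      ((j : ℕ) = 2 * (k : ℕ) + 1 → ((μ j : ℕ) + 1 = b k))) :
    ∏ k : Fin m, ∏ u ∈ Finset.Ico (a k) (b k), φ u = ∏ k : Fin m, φ (2 * (k : ℕ) + 1) := by
  classical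
  -- counting: the "depth" of u has the same parity as u
  have count : ∀ u, 1 ≤ u → u ≤ 2*m - 1 →
      (univ.filter fun k : Fin m => a k ≤ u ∧ u < b k).card % 2 = u % 2 := by
    intro u hu1 hu2
    have hBA : (univ.filter fun k : Fin m => b k ≤ u) ⊆
        (univ.filter fun k : Fin m => a k ≤ u) := by
      intro k hk
      simp only [mem_filter, mem_univ, true_and] at hk ⊢
      have := hab k
      omega
    have hd : (univ.filter fun k : Fin m => a k ≤ u ∧ u < b k) =
        (univ.filter fun k : Fin m => a k ≤ u) \ (univ.filter fun k : Fin m => b k ≤ u) := by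
      ext k
      simp only [mem_filter, mem_sdiff, mem_univ, true_and]
      omega
    -- main count via the permutation
    have h1 : (univ.filter fun j : Fin (2*m) => (μ j:ℕ) < u).card =
        (univ.filter fun j : Fin (2*m) => (j:ℕ) < u).card := by
      apply Finset.card_bij (fun j _ => μ j)
      · intro j hj
        simp only [mem_filter, mem_univ, true_and] at hj ⊢
        exact hj
      · intro j1 _ j2 _ h
        exact μ.injective h
      · intro y hy
        simp only [mem_filter, mem_univ, true_and] at hy
        exact ⟨μ.symm y, by simp [hy], by simp⟩
    have h2 : (univ.filter fun j : Fin (2*m) => (j:ℕ) < u).card = u := by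
      have hu : u < 2*m := by omega
      have : (univ.filter fun j : Fin (2*m) => (j:ℕ) < u) = Finset.Iio (⟨u, hu⟩ : Fin (2*m)) := by
        ext j
        simp [Finset.mem_Iio, Fin.lt_def]
      rw [this, Fin.card_Iio]
    have h3 : (univ.filter fun j : Fin (2*m) => (μ j:ℕ) < u).card =
        (univ.filter fun k : Fin m => a k ≤ u).card +
        (univ.filter fun k : Fin m => b k ≤ u).card := by
      set F : ℕ → ℕ := fun t => if h : t < 2*m then (if (μ ⟨t,h⟩ : ℕ) < u then 1 else 0) else 0
        with hF
      set G1 : ℕ → ℕ := fun t => if h : t < m then (if a ⟨t,h⟩ ≤ u then 1 else 0) else 0 with hG1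
      set G2 : ℕ → ℕ := fun t => if h : t < m then (if b ⟨t,h⟩ ≤ u then 1 else 0) else 0 with hG2
      have e0 : (univ.filter fun j : Fin (2*m) => (μ j:ℕ) < u).card = ∑ t ∈ range (2*m), F t := by
        rw [Finset.card_filter, ← Fin.sum_univ_eq_sum_range F (2*m)]
        apply Finset.sum_congr rfl
        intro j _
        rw [hF]
        simp only
        rw [dif_pos j.isLt, Fin.eta]
      have eA : (univ.filter fun k : Fin m => a k ≤ u).card = ∑ t ∈ range m, G1 t := by
        rw [Finset.card_filter, ← Fin.sum_univ_eq_sum_range G1 m]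
        apply Finset.sum_congr rfl
        intro k _
        rw [hG1]
        simp only
        rw [dif_pos k.isLt, Fin.eta]
      have eB : (univ.filter fun k : Fin m => b k ≤ u).card = ∑ t ∈ range m, G2 t := by
        rw [Finset.card_filter, ← Fin.sum_univ_eq_sum_range G2 m]
        apply Finset.sum_congr rfl
        intro k _
        rw [hG2]
        simp only
        rw [dif_pos k.isLt, Fin.eta]
      rw [e0, eA, eB, sumRangeDouble, ← Finset.sum_add_distrib]
      apply Finset.sum_congr rfl
      intro t ht
      have htm : t < m := Finset.mem_range.1 ht
      have e1 : F (2*t) = G1 t := by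
        rw [hF, hG1]
        simp only
        rw [dif_pos (by omega : 2*t < 2*m), dif_pos htm]
        have va := (hμ ⟨t,htm⟩ ⟨2*t, by omega⟩).1 rfl
        have h1 := (hrange ⟨t,htm⟩).1
        by_cases hle : a ⟨t,htm⟩ ≤ u
        · rw [if_pos (by omega), if_pos hle]
        · rw [if_neg (by omega), if_neg hle]
      have e2 : F (2*t+1) = G2 t := by
        rw [hF, hG2]
        simp only
        rw [dif_pos (by omega : 2*t+1 < 2*m), dif_pos htm]
        have vb := (hμ ⟨t,htm⟩ ⟨2*t+1, by omega⟩).2 rfl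
        by_cases hle : b ⟨t,htm⟩ ≤ u
        · rw [if_pos (by omega), if_pos hle]
        · rw [if_neg (by omega), if_neg hle]
      rw [e1, e2]
    have hAB : (univ.filter fun k : Fin m => a k ≤ u).card +
        (univ.filter fun k : Fin m => b k ≤ u).card = u := by
      rw [← h3, h1, h2]
    have hcle := Finset.card_le_card hBA
    rw [hd, Finset.card_sdiff_of_subset hBA]
    omega
  -- turn the double product into a product over Icc with multiplicities
  have P1 : ∏ k : Fin m, ∏ u ∈ Finset.Ico (a k) (b k), φ u =
      ∏ u ∈ Finset.Icc 1 (2*m-1), φ u ^ (univ.filter fun k : Fin m => a k ≤ u ∧ u < b k).card := by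
    have : ∀ u, φ u ^ (univ.filter fun k : Fin m => a k ≤ u ∧ u < b k).card =
        ∏ k : Fin m, if a k ≤ u ∧ u < b k then φ u else 1 := by
      intro u
      rw [← Finset.prod_filter, Finset.prod_const]
    rw [Finset.prod_congr rfl fun u _ => this u, Finset.prod_comm]
    apply Finset.prod_congr rfl
    intro k _
    have hsub : Finset.Ico (a k) (b k) ⊆ Finset.Icc 1 (2*m-1) := by
      intro u hu
      rw [Finset.mem_Ico] at hu
      rw [Finset.mem_Icc]
      have h1 := (hrange k).1
      have h2 := (hrange k).2
      omega
    calc ∏ u ∈ Finset.Ico (a k) (b k), φ u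
        = ∏ u ∈ Finset.Icc 1 (2*m-1) ∩ Finset.Ico (a k) (b k), φ u := by
          rw [Finset.inter_eq_right.2 hsub]
      _ = ∏ u ∈ Finset.Icc 1 (2*m-1), if u ∈ Finset.Ico (a k) (b k) then φ u else 1 := by
          rw [Finset.prod_ite_mem]
      _ = ∏ u ∈ Finset.Icc 1 (2*m-1), if a k ≤ u ∧ u < b k then φ u else 1 := by
          apply Finset.prod_congr rfl
          intro u _
          simp only [Finset.mem_Ico]
  -- reduce the multiplicities using φ² = 1
  have P2 : ∏ u ∈ Finset.Icc 1 (2*m-1),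
      φ u ^ (univ.filter fun k : Fin m => a k ≤ u ∧ u < b k).card =
      ∏ u ∈ Finset.Icc 1 (2*m-1), (if u % 2 = 1 then φ u else 1) := by
    apply Finset.prod_congr rfl
    intro u hu
    rw [Finset.mem_Icc] at hu
    have hsq := hφ u (Finset.mem_Icc.2 hu)
    have hd2 := count u hu.1 hu.2
    set d := (univ.filter fun k : Fin m => a k ≤ u ∧ u < b k).card with hdd
    have : φ u ^ d = φ u ^ (u % 2) := by
      rw [show d = 2*(d/2) + d % 2 by omega, pow_add, pow_mul, hsq, one_pow, one_mul, hd2]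
    rw [this]
    rcases (by omega : u % 2 = 1 ∨ u % 2 = 0) with h | h
    · simp [h]
    · simp [h]
  -- evaluate the odd product
  have P3 : ∏ u ∈ Finset.Icc 1 (2*m-1), (if u % 2 = 1 then φ u else 1) =
      ∏ k : Fin m, φ (2 * (k : ℕ) + 1) := by
    have hins : Finset.range (2*m) = insert 0 (Finset.Icc 1 (2*m-1)) := by
      ext x
      simp only [Finset.mem_range, Finset.mem_insert, Finset.mem_Icc]
      omega
    have h0 : (0:ℕ) ∉ Finset.Icc 1 (2*m-1) := by simp
    have : ∏ u ∈ Finset.range (2*m), (if u % 2 = 1 then φ u else 1) =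
        ∏ u ∈ Finset.Icc 1 (2*m-1), (if u % 2 = 1 then φ u else 1) := by
      rw [hins, Finset.prod_insert h0, if_neg (by omega), one_mul]
    rw [← this, prodRangeDouble]
    have e : ∀ t ∈ Finset.range m,
        ((if 2*t % 2 = 1 then φ (2*t) else 1) * if (2*t+1) % 2 = 1 then φ (2*t+1) else 1) =
        φ (2*t+1) := fun t _ => by rw [if_neg (by omega), if_pos (by omega), one_mul]
    rw [Finset.prod_congr rfl e]
    exact (Fin.prod_univ_eq_prod_range (fun t => φ (2*t+1)) m).symm
  rw [P1, P2, P3]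

/-- Adding-winding for non-crossing matchings: if `φ(u)² = 1` for `u ∈ {1, …, 2m−1}`, the
pairs `(a k, b k)` form a non-crossing partition of `{1, …, 2m}` with `a k < b k` and `a`
strictly increasing, and `μ` is the associated permutation (`μ(2k−1) = a k`,
`μ(2k) = b k`, encoded on `Fin (2m)` with position/value `j` standing for `j + 1`), then
`sign μ · ∏ₖ ∏_{u = a k}^{b k − 1} φ(u) = ∏_{j=1}^{m} φ(2j − 1)`. -/
theorem noncrossing_adding_winding (m : ℕ) (hm : 1 ≤ m) (φ : ℕ → ℂ)
    (hφ : ∀ u ∈ Finset.Icc 1 (2 * m - 1), φ u ^ 2 = 1)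
    (a b : Fin m → ℕ)
    (hab : ∀ k, a k < b k)
    (ha : StrictMono a)
    (hrange : ∀ k, 1 ≤ a k ∧ b k ≤ 2 * m)
    (hcover : ∀ x, 1 ≤ x → x ≤ 2 * m → ∃! k, a k = x ∨ b k = x)
    (hnc : ¬ ∃ j k : Fin m, j < k ∧ a j < a k ∧ a k < b j ∧ b j < b k)
    (μ : Equiv.Perm (Fin (2 * m)))
    (hμ : ∀ (k : Fin m) (j : Fin (2 * m)),
      ((j : ℕ) = 2 * (k : ℕ) → ((μ j : ℕ) + 1 = a k)) ∧
      ((j : ℕ) = 2 * (k : ℕ) + 1 → ((μ j : ℕ) + 1 = b k))) :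
    ((Equiv.Perm.sign μ : ℤ) : ℂ) * ∏ k : Fin m, ∏ u ∈ Finset.Ico (a k) (b k), φ u =
      ∏ k : Fin m, φ (2 * (k : ℕ) + 1) := by
  have h1 := signOne m a b hab ha hnc μ hμ
  have h2 := prodPart m hm φ hφ a b hab hrange μ hμ
  rw [h1, h2]
  simp
end

section
/- Edwards–Sokal marginal over edge configurations: let G be a finite simple graph with vertex set V and edge set E, let β ≥ 0 and p = 1 − e^{−2β}. Then for every spin configuration σ : V → {−1, 1}, Σ_{ω ⊆ E} μ(σ, ω) = e^{−β|E|} · e^{β H(σ)}, where H(σ) = Σ_{{x,y} ∈ E} σ_x σ_y. In particular the σ-marginal of the normalized Edwards–Sokal measure is the Ising measure π_β(σ) ∝ e^{β H(σ)}. -/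
open Finset

/-- The product of the spins at the two endpoints of an unordered pair of vertices. -/
def spinProd {V : Type*} (σ : V → ℝ) : Sym2 V → ℝ :=
  Sym2.lift ⟨fun x y => σ x * σ y, fun x y => mul_comm _ _⟩

/-- The Edwards–Sokal weight `μ(σ, ω)` with parameter `p`, edge set `E` and open edge set
`ω`: an edge `e ∉ ω` contributes `1 − p`; an edge `e ∈ ω` contributes `p` if its endpoint
spins agree and `0` otherwise. -/
noncomputable def esWeight {V : Type*} [DecidableEq V] (p : ℝ)
    (E ω : Finset (Sym2 V)) (σ : V → ℝ) : ℝ :=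
  ∏ e ∈ E, if e ∈ ω then (if spinProd σ e = 1 then p else 0) else (1 - p)

/-- Edwards–Sokal marginal over edge configurations: for `β ≥ 0`, `p = 1 − e^{−2β}` and any
`±1`-valued spin configuration `σ`,
`∑_{ω ⊆ E} μ(σ, ω) = e^{−β |E|} · e^{β H(σ)}` where `H(σ) = ∑_{{x,y} ∈ E} σ_x σ_y`. -/
theorem edwards_sokal_spin_marginal {V : Type*} [Fintype V] [DecidableEq V]
    (G : SimpleGraph V) [DecidableRel G.Adj] (β : ℝ) (hβ : 0 ≤ β)
    (p : ℝ) (hp : p = 1 - Real.exp (-2 * β))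
    (σ : V → ℝ) (hσ : ∀ v, σ v = 1 ∨ σ v = -1) :
    ∑ ω ∈ G.edgeFinset.powerset, esWeight p G.edgeFinset ω σ =
      Real.exp (-β * (G.edgeFinset.card : ℝ)) *
        Real.exp (β * ∑ e ∈ G.edgeFinset, spinProd σ e) := by
  have hE : ∀ e : Sym2 V, spinProd σ e = 1 ∨ spinProd σ e = -1 := fun e =>
    Sym2.inductionOn e fun x y => by
      rcases hσ x with h | h <;> rcases hσ y with h' | h' <;> simp [spinProd, h, h']
  calc
    ∑ ω ∈ G.edgeFinset.powerset, esWeight p G.edgeFinset ω σ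
        = ∑ ω ∈ G.edgeFinset.powerset,
            (∏ e ∈ ω, (if spinProd σ e = 1 then p else 0)) *
              ∏ _e ∈ G.edgeFinset \ ω, (1 - p) := by
      refine Finset.sum_congr rfl fun ω hω => ?_
      rw [Finset.mem_powerset] at hω
      unfold esWeight
      rw [Finset.prod_ite, Finset.filter_mem_eq_inter,
        Finset.inter_eq_right.mpr hω, ← Finset.sdiff_eq_filter]
    _ = ∏ e ∈ G.edgeFinset, ((if spinProd σ e = 1 then p else 0) + (1 - p)) :=
      (Finset.prod_add _ _ _).symm
    _ = ∏ e ∈ G.edgeFinset, Real.exp (β * (spinProd σ e - 1)) := by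
      refine Finset.prod_congr rfl fun e _ => ?_
      rcases hE e with h | h <;>
        simp [h, hp, (by norm_num : (-1 : ℝ) ≠ 1)] <;> ring_nf
    _ = Real.exp (∑ e ∈ G.edgeFinset, β * (spinProd σ e - 1)) :=
      (Real.exp_sum _ _).symm
    _ = _ := by
      rw [← Real.exp_add]
      congr 1
      simp [mul_sub, Finset.sum_sub_distrib, Finset.mul_sum, Finset.sum_const]
      ring
end
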